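/- arXiv:1803.10939 — 3 statements merged into one kernel-verified Lean document; each statement's English description precedes it below -/
import Mathlib

section
/- Let τ : Ω → [0, +∞] be a random variable with P[τ = 0] = 0, with default process H_t = 1_{{τ ≤ t}}, and let F = (F_t)_{t≥0} be a filtration. For every t ≥ 0 let C_t be the collection of all random variables ξ of the form ξ = ζ(1 − H_s), where ζ is bounded and F_t-measurable and 0 ≤ s ≤ t. Denoting by 𝒩 the family of P-null sets of 𝒜, one has σ(C_t) ∨ 𝒩 = G̃_t ∨ 𝒩 for every t ≥ 0, where G̃_t := F_t ∨ σ(H_s : 0 ≤ s ≤ t) and σ(C_t) is the smallest σ-algebra making every element of C_t measurable. -/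
open MeasureTheory Set
open scoped ENNReal NNReal

/-- Let `τ : Ω → [0, +∞]` with `P[τ = 0] = 0`, default process
`H_t = 1_{τ ≤ t}`, and let `F` be a filtration. With `C_t` the collection of random variables
`ξ = ζ (1 - H_s)`, `ζ` bounded `F_t`-measurable, `0 ≤ s ≤ t`, and `𝒩` the P-null sets, one has
`σ(C_t) ∨ 𝒩 = G̃_t ∨ 𝒩` where `G̃_t = F_t ∨ σ(H_s : 0 ≤ s ≤ t)`. -/
theorem sigma_algebra_generated_by_Ct_sup_null_eq_Gtilde_sup_null
    {Ω : Type*} {mΩ : MeasurableSpace Ω} (P : Measure Ω) [IsProbabilityMeasure P]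
    (τ : Ω → ℝ≥0∞) (hτ0 : P {ω | τ ω = 0} = 0)
    (F : MeasureTheory.Filtration ℝ≥0 mΩ)
    (H : ℝ≥0 → Ω → ℝ)
    (hH : ∀ s : ℝ≥0, H s = Set.indicator {ω | τ ω ≤ (s : ℝ≥0∞)} (fun _ => (1 : ℝ)))
    (𝒩 : MeasurableSpace Ω)
    (h𝒩 : 𝒩 = MeasurableSpace.generateFrom {s : Set Ω | P s = 0})
    (t : ℝ≥0)
    (Ct : Set (Ω → ℝ))
    (hCt : Ct = {ξ | ∃ (ζ : Ω → ℝ) (s : ℝ≥0), s ≤ t ∧ Measurable[F t] ζ ∧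
      (∃ C : ℝ, ∀ ω, |ζ ω| ≤ C) ∧ ξ = fun ω => ζ ω * (1 - H s ω)}) :
    (⨆ ξ ∈ Ct, MeasurableSpace.comap ξ (inferInstance : MeasurableSpace ℝ)) ⊔ 𝒩 =
      (F t ⊔ (⨆ s ∈ Set.Iic t,
        MeasurableSpace.comap (H s) (inferInstance : MeasurableSpace ℝ))) ⊔ 𝒩 := by
  set L := (⨆ ξ ∈ Ct, MeasurableSpace.comap ξ (inferInstance : MeasurableSpace ℝ)) ⊔ 𝒩 with hL
  set M := F t ⊔ (⨆ s ∈ Set.Iic t,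
      MeasurableSpace.comap (H s) (inferInstance : MeasurableSpace ℝ)) with hM
  apply le_antisymm
  · -- L ≤ M ⊔ 𝒩
    refine sup_le ?_ le_sup_right
    refine iSup₂_le fun ξ hξ => ?_
    rw [hCt] at hξ
    obtain ⟨ζ, s, hst, hζ, -, rfl⟩ := hξ
    have hζM : Measurable[M] ζ := hζ.mono le_sup_left le_rfl
    have hHsM : Measurable[M] (H s) := by
      refine Measurable.mono ?_ (le_trans (le_iSup₂ (f := fun s _ =>
        MeasurableSpace.comap (H s) (inferInstance : MeasurableSpace ℝ)) s (Set.mem_Iic.mpr hst)) le_sup_right)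
        le_rfl
      exact measurable_iff_comap_le.mpr le_rfl
    have : Measurable[M] fun ω => ζ ω * (1 - H s ω) :=
      hζM.mul (measurable_const.sub hHsM)
    exact (measurable_iff_comap_le.mp this).trans le_sup_left
  · -- M ⊔ 𝒩 ≤ L
    refine sup_le (sup_le ?_ ?_) le_sup_right
    · -- F t ≤ L
      intro A hA
      set ξ : Ω → ℝ := fun ω => (A.indicator (fun _ => (1:ℝ)) ω) * (1 - H 0 ω) with hξdef
      have hξCt : ξ ∈ Ct := by
        rw [hCt]
        refine ⟨A.indicator (fun _ => (1:ℝ)), 0, zero_le,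
          Measurable.indicator measurable_const hA, ⟨1, fun ω => ?_⟩, rfl⟩
        by_cases h : ω ∈ A <;> simp [Set.indicator_apply, h]
      have hA_eq : A = ξ ⁻¹' {1} ∪ (A ∩ {ω | τ ω = 0}) := by
        ext ω
        have h0 : ((0 : ℝ≥0) : ℝ≥0∞) = 0 := rfl
        simp only [hξdef, hH 0, Set.mem_union, Set.mem_preimage, Set.mem_singleton_iff,
          Set.indicator_apply, Set.mem_setOf_eq, Set.mem_inter_iff, h0, nonpos_iff_eq_zero]
        by_cases hτ : τ ω = 0 <;> by_cases hA' : ω ∈ A <;> simp [hτ, hA']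
      rw [hA_eq]
      have h1 : MeasurableSet[L] (ξ ⁻¹' {1}) := by
        have : MeasurableSpace.comap ξ (inferInstance : MeasurableSpace ℝ) ≤ L :=
          (le_iSup₂ (f := fun ξ _ =>
            MeasurableSpace.comap ξ (inferInstance : MeasurableSpace ℝ)) ξ hξCt).trans
            le_sup_left
        exact this _ ⟨{1}, measurableSet_singleton 1, rfl⟩
      have h2 : MeasurableSet[L] (A ∩ {ω | τ ω = 0}) := by
        have hnull : P (A ∩ {ω | τ ω = 0}) = 0 :=
          measure_mono_null Set.inter_subset_right hτ0
        have : MeasurableSet[𝒩] (A ∩ {ω | τ ω = 0}) := by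
          rw [h𝒩]; exact MeasurableSpace.measurableSet_generateFrom hnull
        exact (le_sup_right : 𝒩 ≤ L) _ this
      exact h1.union h2
    · -- ⨆ s ∈ Iic t, comap (H s) ≤ L
      refine iSup₂_le fun s hs => ?_
      set ξ : Ω → ℝ := fun ω => (fun _ : Ω => (1:ℝ)) ω * (1 - H s ω) with hξdef
      have hξCt : ξ ∈ Ct := by
        rw [hCt]
        exact ⟨fun _ => 1, s, hs, measurable_const, ⟨1, fun ω => by simp⟩, rfl⟩
      have hcomp : H s = (fun x : ℝ => 1 - x) ∘ ξ := by
        funext ω; simp [hξdef]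
      have hcomapξ : MeasurableSpace.comap ξ (inferInstance : MeasurableSpace ℝ) ≤ L :=
        (le_iSup₂ (f := fun ξ _ =>
          MeasurableSpace.comap ξ (inferInstance : MeasurableSpace ℝ)) ξ hξCt).trans
          le_sup_left
      calc MeasurableSpace.comap (H s) (inferInstance : MeasurableSpace ℝ)
          = MeasurableSpace.comap ξ (MeasurableSpace.comap (fun x : ℝ => 1 - x)
            (inferInstance : MeasurableSpace ℝ)) := by
            rw [hcomp, MeasurableSpace.comap_comp]
        _ ≤ MeasurableSpace.comap ξ (inferInstance : MeasurableSpace ℝ) :=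
            MeasurableSpace.comap_mono
              (measurable_iff_comap_le.mp (measurable_const.sub measurable_id))
        _ ≤ L := hcomapξ
end

section
/- Let τ be a random time satisfying hypothesis (A) (τ avoids F-stopping times: P[τ = σ < +∞] = 0 for every F-stopping time σ) and hypothesis (H) (for every t ≥ 0, F_∞ and G̃_t are conditionally independent given F_t). Then there exists a process A = (A_t)_{t≥0} such that: (i) for every t ≥ 0, A_t = E[1_{{τ > t}} | F_t] a.s. (A is a version of the Azéma supermartingale); (ii) every path of A is continuous and nonincreasing, with A_0 = 1; and (iii) almost surely, A_t > 0 for every t with t ≤ τ. -/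
open MeasureTheory Set Filter
open scoped ENNReal NNReal

variable {Ω : Type*}

/-- The default process `H_s = 1_{τ ≤ s}` of a random time `τ`. -/
noncomputable def defaultProcess (τ : Ω → ℝ≥0∞) (s : ℝ≥0) : Ω → ℝ :=
  Set.indicator {ω | τ ω ≤ (s : ℝ≥0∞)} (fun _ => (1 : ℝ))

/-- `ℋ_t = σ(H_s : 0 ≤ s ≤ t)`, the natural filtration of the default process. -/
noncomputable def natFiltDefault (τ : Ω → ℝ≥0∞) (t : ℝ≥0) : MeasurableSpace Ω :=
  ⨆ s ∈ Set.Iic t, MeasurableSpace.comap (defaultProcess τ s) (inferInstance : MeasurableSpace ℝ)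

/-- `G̃_t = F_t ∨ ℋ_t`. -/
noncomputable def enlTilde {mΩ : MeasurableSpace Ω} (F : Filtration ℝ≥0 mΩ)
    (τ : Ω → ℝ≥0∞) (t : ℝ≥0) : MeasurableSpace Ω :=
  F t ⊔ natFiltDefault τ t

/-- Hypothesis (A): `τ` avoids `F`-stopping times, i.e. `P[τ = σ < ∞] = 0` for every
`F`-stopping time `σ`. -/
def HypothesisA {mΩ : MeasurableSpace Ω} (P : Measure Ω) (F : Filtration ℝ≥0 mΩ)
    (τ : Ω → ℝ≥0∞) : Prop :=
  ∀ σ : Ω → ℝ≥0∞, (∀ t : ℝ≥0, MeasurableSet[F t] {ω | σ ω ≤ (t : ℝ≥0∞)}) →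
    P {ω | τ ω = σ ω ∧ σ ω ≠ ∞} = 0

/-- Conditional independence of `m1` and `m2` given `m0`: for all `A ∈ m1`, `B ∈ m2`,
`E[1_{A ∩ B} | m0] = E[1_A | m0] ⬝ E[1_B | m0]` a.s. -/
def CondIndepGiven {mΩ : MeasurableSpace Ω} (P : Measure Ω)
    (m0 m1 m2 : MeasurableSpace Ω) : Prop :=
  ∀ A B : Set Ω, MeasurableSet[m1] A → MeasurableSet[m2] B →
    (P[(A ∩ B).indicator (fun _ => (1 : ℝ)) | m0]) =ᵐ[P]
      fun ω => (P[A.indicator (fun _ => (1 : ℝ)) | m0]) ω *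
        (P[B.indicator (fun _ => (1 : ℝ)) | m0]) ω

/-- Hypothesis (H): for every `t`, `F_∞` and `G̃_t` are conditionally independent given `F_t`. -/
def HypothesisH {mΩ : MeasurableSpace Ω} (P : Measure Ω) (F : Filtration ℝ≥0 mΩ)
    (τ : Ω → ℝ≥0∞) : Prop :=
  ∀ t : ℝ≥0, CondIndepGiven P (F t) (⨆ s : ℝ≥0, F s) (enlTilde F τ t)

section Helpers

open ProbabilityTheory

variable {mΩ : MeasurableSpace Ω}

lemma natFiltDefault_le (τ : Ω → ℝ≥0∞) (hτ : Measurable τ) (t : ℝ≥0) :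
    natFiltDefault τ t ≤ mΩ := by
  refine iSup₂_le fun s _ => ?_
  refine MeasurableSpace.comap_le_iff_le_map.mpr ?_
  intro u hu
  exact (measurable_const.indicator (hτ measurableSet_Iic)).comp measurable_id hu

lemma measurableSet_tau_le_natFilt (τ : Ω → ℝ≥0∞) {s t : ℝ≥0} (hst : s ≤ t) :
    MeasurableSet[natFiltDefault τ t] {ω | τ ω ≤ (s : ℝ≥0∞)} := by
  have h : MeasurableSet[MeasurableSpace.comap (defaultProcess τ s)
      (inferInstance : MeasurableSpace ℝ)] {ω | τ ω ≤ (s : ℝ≥0∞)} := by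
    refine ⟨{1}, measurableSet_singleton 1, ?_⟩
    ext ω
    by_cases h : τ ω ≤ (s : ℝ≥0∞) <;>
      simp [defaultProcess, Set.indicator_apply, h]
  have hle : MeasurableSpace.comap (defaultProcess τ s)
      (inferInstance : MeasurableSpace ℝ) ≤ natFiltDefault τ t := by
    exact le_iSup₂ (f := fun (s : ℝ≥0) (_ : s ∈ Set.Iic t) =>
      MeasurableSpace.comap (defaultProcess τ s) (inferInstance : MeasurableSpace ℝ)) s hst
  exact hle _ h

lemma measurableSet_tau_gt_enlTilde (F : Filtration ℝ≥0 mΩ) (τ : Ω → ℝ≥0∞) {s t : ℝ≥0}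
    (hst : s ≤ t) : MeasurableSet[enlTilde F τ t] {ω | (s : ℝ≥0∞) < τ ω} := by
  have h1 : MeasurableSet[natFiltDefault τ t] {ω | τ ω ≤ (s : ℝ≥0∞)} :=
    measurableSet_tau_le_natFilt τ hst
  have h2 : natFiltDefault τ t ≤ enlTilde F τ t := le_sup_right
  have h3 : MeasurableSet[enlTilde F τ t] {ω | τ ω ≤ (s : ℝ≥0∞)} := h2 _ h1
  have : {ω | (s : ℝ≥0∞) < τ ω} = {ω | τ ω ≤ (s : ℝ≥0∞)}ᶜ := by
    ext ω; simp [not_le]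
  rw [this]
  exact h3.compl

lemma enlTilde_le (F : Filtration ℝ≥0 mΩ) (τ : Ω → ℝ≥0∞) (hτ : Measurable τ) (t : ℝ≥0) :
    enlTilde F τ t ≤ mΩ :=
  sup_le (F.le t) (natFiltDefault_le τ hτ t)

/-- Under hypothesis (H), conditional expectations of `G̃_t`-measurable indicators
given `F_∞` coincide with those given `F_t`. -/
lemma condexp_iSup_eq_condexp_filt {P : Measure Ω} [IsProbabilityMeasure P]
    {F : Filtration ℝ≥0 mΩ} {τ : Ω → ℝ≥0∞} (hτ : Measurable τ)
    (hypH : HypothesisH P F τ) (t : ℝ≥0) {B : Set Ω}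
    (hB : MeasurableSet[enlTilde F τ t] B) :
    P[B.indicator (fun _ => (1 : ℝ)) | (⨆ s : ℝ≥0, F s)]
      =ᵐ[P] P[B.indicator (fun _ => (1 : ℝ)) | F t] := by
  have hmsup : (⨆ s : ℝ≥0, F s) ≤ mΩ := iSup_le fun s => F.le s
  have hmt : F t ≤ mΩ := F.le t
  have hBΩ : MeasurableSet B := enlTilde_le F τ hτ t B hB
  set f := B.indicator (fun _ => (1 : ℝ)) with hf_def
  have hf_int : Integrable f P := (integrable_const 1).indicator hBΩ
  set g := P[f | F t] with hg_def
  have hgsm : StronglyMeasurable[F t] g := stronglyMeasurable_condExp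
  refine (ae_eq_condExp_of_forall_setIntegral_eq hmsup hf_int
    (fun s _ _ => integrable_condExp.integrableOn) ?_ ?_).symm
  · intro s hs _
    have hsΩ : MeasurableSet s := hmsup _ hs
    have hiS_int : Integrable (s.indicator (fun _ => (1 : ℝ))) P :=
      (integrable_const 1).indicator hsΩ
    -- LHS : ∫ x in s, g x  = ∫ g * 1_s
    have hmul : ∀ (h : Ω → ℝ), s.indicator h = fun ω => h ω * s.indicator (fun _ => (1:ℝ)) ω := by
      intro h; ext ω; by_cases hω : ω ∈ s <;> simp [Set.indicator_apply, hω]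
    have hL : ∫ x in s, g x ∂P = ∫ x, g x * s.indicator (fun _ => (1:ℝ)) x ∂P := by
      rw [← integral_indicator hsΩ]
      congr 1
      exact hmul g
    have hgs_int : Integrable (g * s.indicator (fun _ => (1:ℝ))) P := by
      have : (g * s.indicator (fun _ => (1:ℝ))) = s.indicator g := by
        ext ω; by_cases hω : ω ∈ s <;> simp [Set.indicator_apply, hω]
      rw [this]
      exact integrable_condExp.indicator hsΩ
    have hpull := condExp_mul_of_stronglyMeasurable_left (μ := P) (m := F t) hgsm hgs_int hiS_int
    have hL2 : ∫ x, g x * s.indicator (fun _ => (1:ℝ)) x ∂P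
        = ∫ x, (P[(fun ω => g ω * s.indicator (fun _ => (1:ℝ)) ω) | F t]) x ∂P := by
      exact (integral_condExp hmt).symm
    have hL3 : ∫ x, (P[(fun ω => g ω * s.indicator (fun _ => (1:ℝ)) ω) | F t]) x ∂P
        = ∫ x, g x * (P[s.indicator (fun _ => (1:ℝ)) | F t]) x ∂P := by
      refine integral_congr_ae ?_
      exact hpull
    -- RHS : ∫ x in s, f x = E[1_{s∩B}]
    have hR : ∫ x in s, f x ∂P = ∫ x, (s ∩ B).indicator (fun _ => (1:ℝ)) x ∂P := by
      rw [← integral_indicator hsΩ]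
      congr 1
      ext ω
      by_cases h1 : ω ∈ s <;> by_cases h2 : ω ∈ B <;>
        simp [hf_def, Set.indicator_apply, h1, h2]
    have hCI := hypH t s B hs hB
    have hR2 : ∫ x, (s ∩ B).indicator (fun _ => (1:ℝ)) x ∂P
        = ∫ x, (P[s.indicator (fun _ => (1:ℝ)) | F t]) x * g x ∂P := by
      rw [← integral_condExp (μ := P) (f := (s ∩ B).indicator fun _ => (1:ℝ)) hmt]
      exact integral_congr_ae hCI
    rw [hL, hL2, hL3, hR, hR2]
    congr 1
    ext x
    ring
  · exact StronglyMeasurable.aestronglyMeasurable (hgsm.mono (le_iSup (fun s : ℝ≥0 => (F s : MeasurableSpace Ω)) t))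

end Helpers
section AtomChar

open TopologicalSpace
open scoped Topology

/-- `invSeq m = 1/(m+1)`. -/
noncomputable def invSeq (m : ℕ) : ℝ≥0 := ((m : ℝ≥0) + 1)⁻¹

lemma invSeq_pos (m : ℕ) : 0 < invSeq m := by
  rw [invSeq]
  exact inv_pos.mpr (by positivity)

lemma invSeq_antitone : Antitone invSeq := by
  intro a b hab
  rw [invSeq, invSeq]
  exact inv_anti₀ (by positivity)
    (by exact_mod_cast add_le_add_left (by exact_mod_cast hab) 1)

lemma coe_invSeq (m : ℕ) : ((invSeq m : ℝ≥0) : ℝ≥0∞) = ((m : ℝ≥0∞) + 1)⁻¹ := by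
  rw [invSeq, ENNReal.coe_inv (by positivity)]
  push_cast
  rfl

lemma real_invSeq (m : ℕ) : ((invSeq m : ℝ≥0) : ℝ) = ((m : ℝ) + 1)⁻¹ := by
  rw [invSeq]
  push_cast
  norm_num

lemma real_invSeq_pos (m : ℕ) : (0:ℝ) < ((invSeq m : ℝ≥0) : ℝ) := by
  exact_mod_cast invSeq_pos m

lemma coe_invSeq_le_inv_nat (m : ℕ) : ((invSeq m : ℝ≥0) : ℝ≥0∞) ≤ ((m : ℝ≥0∞))⁻¹ := by
  rw [coe_invSeq]
  exact ENNReal.inv_le_inv' le_self_add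

lemma iInter_Icc_singleton (s : ℝ≥0) :
    (⋂ m : ℕ, Set.Icc ((s : ℝ≥0∞) - invSeq m) ((s : ℝ≥0∞) + invSeq m)) = {(s : ℝ≥0∞)} := by
  ext x
  simp only [Set.mem_iInter, Set.mem_Icc, Set.mem_singleton_iff]
  constructor
  · intro h
    have hle : x ≤ (s : ℝ≥0∞) := by
      by_contra hx
      push_neg at hx
      have hne : x - (s : ℝ≥0∞) ≠ 0 := fun hc => absurd (tsub_eq_zero_iff_le.mp hc) (not_le.mpr hx)
      obtain ⟨n, hn⟩ := ENNReal.exists_inv_nat_lt hne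
      have h1 : ((invSeq n : ℝ≥0) : ℝ≥0∞) < x - (s : ℝ≥0∞) :=
        lt_of_le_of_lt (coe_invSeq_le_inv_nat n) hn
      have h2 : (s : ℝ≥0∞) + invSeq n < (s : ℝ≥0∞) + (x - (s : ℝ≥0∞)) :=
        ENNReal.add_lt_add_left ENNReal.coe_ne_top h1
      rw [add_tsub_cancel_of_le hx.le] at h2
      exact absurd ((h n).2.trans_lt h2) (lt_irrefl x)
    have hge : (s : ℝ≥0∞) ≤ x := by
      by_contra hx
      push_neg at hx
      have hxt : x ≠ ⊤ := hx.ne_top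
      have hne : (s : ℝ≥0∞) - x ≠ 0 := fun hc => absurd (tsub_eq_zero_iff_le.mp hc) (not_le.mpr hx)
      obtain ⟨n, hn⟩ := ENNReal.exists_inv_nat_lt hne
      have h1 : ((invSeq n : ℝ≥0) : ℝ≥0∞) < (s : ℝ≥0∞) - x :=
        lt_of_le_of_lt (coe_invSeq_le_inv_nat n) hn
      have h2 : (s : ℝ≥0∞) ≤ x + invSeq n := tsub_le_iff_right.mp (h n).1
      have h3 : x + ((invSeq n : ℝ≥0) : ℝ≥0∞) < x + ((s : ℝ≥0∞) - x) :=
        ENNReal.add_lt_add_left hxt h1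
      rw [add_tsub_cancel_of_le hx.le] at h3
      exact absurd (h2.trans_lt h3) (lt_irrefl _)
    exact le_antisymm hle hge
  · rintro rfl
    exact fun m => ⟨tsub_le_self, le_self_add⟩

lemma tendsto_meas_Icc (ν : Measure ℝ≥0∞) [IsFiniteMeasure ν] (s : ℝ≥0) :
    Tendsto (fun m : ℕ => ν (Set.Icc ((s : ℝ≥0∞) - invSeq m) ((s : ℝ≥0∞) + invSeq m))) atTop
      (𝓝 (ν {(s : ℝ≥0∞)})) := by
  have hanti : Antitone fun m : ℕ => Set.Icc ((s : ℝ≥0∞) - invSeq m) ((s : ℝ≥0∞) + invSeq m) := by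
    intro a b hab
    refine Set.Icc_subset_Icc ?_ ?_
    · exact tsub_le_tsub_left (ENNReal.coe_le_coe.mpr (invSeq_antitone hab)) _
    · exact add_le_add_right (ENNReal.coe_le_coe.mpr (invSeq_antitone hab)) _
  have h := tendsto_measure_iInter_atTop (μ := ν)
    (s := fun m : ℕ => Set.Icc ((s : ℝ≥0∞) - invSeq m) ((s : ℝ≥0∞) + invSeq m))
    (fun i => measurableSet_Icc.nullMeasurableSet) hanti ⟨0, measure_ne_top ν _⟩
  rw [iInter_Icc_singleton] at h
  exact h

lemma le_meas_singleton_of_icc (ν : Measure ℝ≥0∞) [IsFiniteMeasure ν] (s : ℝ≥0) {c : ℝ≥0∞}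
    (h : ∀ m : ℕ, c ≤ ν (Set.Icc ((s : ℝ≥0∞) - invSeq m) ((s : ℝ≥0∞) + invSeq m))) :
    c ≤ ν {(s : ℝ≥0∞)} :=
  ge_of_tendsto' (tendsto_meas_Icc ν s) h

/-- Countable "grid" of points in `[0,t]` used to detect atoms. -/
noncomputable def Qtt (t : ℝ≥0) : Set ℝ≥0 :=
  insert 0 (insert t (Set.range (denseSeq ℝ≥0) ∩ Set.Iic t))

lemma Qtt_countable (t : ℝ≥0) : (Qtt t).Countable :=
  (((countable_range _).mono Set.inter_subset_left).insert t).insert 0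

lemma zero_mem_Qtt (t : ℝ≥0) : (0 : ℝ≥0) ∈ Qtt t := Set.mem_insert _ _

lemma self_mem_Qtt (t : ℝ≥0) : t ∈ Qtt t := Set.mem_insert_of_mem _ (Set.mem_insert _ _)

lemma Qtt_le {t q : ℝ≥0} (hq : q ∈ Qtt t) : q ≤ t := by
  rcases hq with rfl | hq
  · exact zero_le'
  rcases hq with rfl | hq
  · exact le_rfl
  exact hq.2

lemma Qtt_between {a b t : ℝ≥0} (hab : a < b) (hbt : b ≤ t) : ∃ q ∈ Qtt t, a < q ∧ q < b := by
  have hd : Dense (Set.range (denseSeq ℝ≥0)) := denseRange_denseSeq ℝ≥0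
  obtain ⟨z, hz, hz2⟩ := hd.exists_between hab
  exact ⟨z, Set.mem_insert_of_mem _ (Set.mem_insert_of_mem _ ⟨hz, (hz2.2.le.trans hbt)⟩),
    hz2.1, hz2.2⟩

/-- Characterization of the existence of an atom of mass `≥ ε` in `[0, t]` through countably
many conditions involving only intervals with endpoints in the countable grid `Qtt t`. -/
lemma exists_atom_iff (ν : Measure ℝ≥0∞) [IsFiniteMeasure ν] (t : ℝ≥0) (ε : ℝ) (hε : 0 < ε) :
    (∃ s : ℝ≥0, s ≤ t ∧ ε ≤ (ν {(s : ℝ≥0∞)}).toReal) ↔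
    (∀ n : ℕ, (∃ q ∈ Qtt t, ∃ r ∈ Qtt t, q < r ∧ (r : ℝ) - (q : ℝ) < ((invSeq n : ℝ≥0) : ℝ) ∧
        ε ≤ (ν (Set.Ioc (q : ℝ≥0∞) (r : ℝ≥0∞))).toReal) ∨
      (∃ r ∈ Qtt t, (r : ℝ) < ((invSeq n : ℝ≥0) : ℝ) ∧ ε ≤ (ν (Set.Iic (r : ℝ≥0∞))).toReal)) := by
  constructor
  · rintro ⟨s, hst, hs⟩ n
    rcases eq_or_lt_of_le (zero_le (a := s)) with hs0 | hs0
    · -- s = 0 : use the second disjunct with r = 0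
      right
      refine ⟨0, zero_mem_Qtt t, by exact_mod_cast invSeq_pos n, ?_⟩
      refine hs.trans (ENNReal.toReal_mono (measure_ne_top ν _) (measure_mono ?_))
      rw [← hs0]
      intro x hx
      simp only [Set.mem_singleton_iff] at hx
      simp [hx]
    · -- 0 < s : use the first disjunct
      left
      set half : ℝ≥0 := invSeq n / 2 with hhalf
      have hhalfpos : 0 < half := div_pos (invSeq_pos n) two_pos
      have hhalf2 : half + half = invSeq n := by
        rw [hhalf]; exact add_halves _
      have h3 : ((half : ℝ≥0) : ℝ) + half = ((invSeq n : ℝ≥0) : ℝ) := by exact_mod_cast hhalf2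
      have hhp : (0:ℝ) < (half : ℝ≥0) := by exact_mod_cast hhalfpos
      have hlt : s - half < s := tsub_lt_self hs0 hhalfpos
      obtain ⟨q, hqQ, hq1, hq2⟩ := Qtt_between hlt hst
      have hqr : (s : ℝ) ≤ (q : ℝ) + half := by
        have h1 : s ≤ (s - half) + half := le_tsub_add
        have h2 : ((s - half : ℝ≥0) : ℝ) + half ≤ (q : ℝ) + half :=
          add_le_add_left (by exact_mod_cast hq1.le) _
        calc (s : ℝ) ≤ ((s - half : ℝ≥0) : ℝ) + half := by exact_mod_cast h1
          _ ≤ (q : ℝ) + half := h2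
      rcases eq_or_lt_of_le hst with hsteq | hstlt
      · -- s = t : take r = t
        refine ⟨q, hqQ, t, self_mem_Qtt t, ?_, ?_, ?_⟩
        · rw [← hsteq]; exact hq2
        · have ht' : (t : ℝ) = (s : ℝ) := by exact_mod_cast hsteq.symm
          rw [ht']
          linarith [hqr]
        · refine hs.trans (ENNReal.toReal_mono (measure_ne_top ν _) (measure_mono ?_))
          intro x hx
          simp only [Set.mem_singleton_iff] at hx
          subst hx
          exact ⟨ENNReal.coe_lt_coe.mpr hq2, ENNReal.coe_le_coe.mpr hsteq.le⟩
      · -- s < t : pick r ∈ Qtt t with s < r < min t (s + half)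
        have hb : s < min t (s + half) := lt_min hstlt (lt_add_of_pos_right s hhalfpos)
        obtain ⟨r, hrQ, hr1, hr2⟩ := Qtt_between hb (min_le_left _ _)
        refine ⟨q, hqQ, r, hrQ, lt_trans hq2 hr1, ?_, ?_⟩
        · have h1 : (r : ℝ) < (s : ℝ) + half := by
            have := lt_of_lt_of_le hr2 (min_le_right _ _)
            exact_mod_cast this
          linarith [hqr]
        · refine hs.trans (ENNReal.toReal_mono (measure_ne_top ν _) (measure_mono ?_))
          intro x hx
          simp only [Set.mem_singleton_iff] at hx
          subst hx
          exact ⟨ENNReal.coe_lt_coe.mpr hq2, ENNReal.coe_le_coe.mpr hr1.le⟩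
  · intro h
    by_cases hA : ∀ m : ℕ, ∃ n, m ≤ n ∧
        (∃ r ∈ Qtt t, (r : ℝ) < ((invSeq n : ℝ≥0) : ℝ) ∧ ε ≤ (ν (Set.Iic (r : ℝ≥0∞))).toReal)
    · -- atom at 0
      refine ⟨0, zero_le', ?_⟩
      rw [← ENNReal.ofReal_le_iff_le_toReal (measure_ne_top ν _)]
      refine le_meas_singleton_of_icc ν 0 (fun m => ?_)
      obtain ⟨n, hmn, r, hrQ, hr1, hr2⟩ := hA m
      have hsub : Set.Iic ((r : ℝ≥0) : ℝ≥0∞) ⊆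
          Set.Icc (((0:ℝ≥0) : ℝ≥0∞) - invSeq m) (((0:ℝ≥0) : ℝ≥0∞) + invSeq m) := by
        intro x hx
        refine ⟨by simp, le_trans hx ?_⟩
        have hrm : (r : ℝ≥0) ≤ invSeq m := by
          have h0 : ((invSeq n : ℝ≥0) : ℝ) ≤ ((invSeq m : ℝ≥0) : ℝ) := by
            exact_mod_cast invSeq_antitone hmn
          exact_mod_cast hr1.le.trans h0
        simp only [ENNReal.coe_zero, zero_add]
        exact_mod_cast hrm
      refine le_trans ?_ (measure_mono hsub)
      rw [ENNReal.ofReal_le_iff_le_toReal (measure_ne_top ν _)]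
      exact hr2
    · -- from some point on, the first disjunct always holds
      push_neg at hA
      obtain ⟨m₀, hm₀⟩ := hA
      have hleft : ∀ k : ℕ, ∃ q ∈ Qtt t, ∃ r ∈ Qtt t, q < r ∧
          (r : ℝ) - (q : ℝ) < ((invSeq k : ℝ≥0) : ℝ) ∧
          ε ≤ (ν (Set.Ioc (q:ℝ≥0∞) (r:ℝ≥0∞))).toReal := by
        intro k
        rcases h (k + m₀) with hle | hri
        · obtain ⟨q, hqQ, r, hrQ, hqr2, hd, hν⟩ := hle
          refine ⟨q, hqQ, r, hrQ, hqr2, lt_of_lt_of_le hd ?_, hν⟩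
          exact_mod_cast invSeq_antitone (Nat.le_add_right k m₀)
        · exfalso
          obtain ⟨rr, hrrQ, hrr1, hrr2⟩ := hri
          exact absurd hrr2 (not_le.mpr (hm₀ (k + m₀) (Nat.le_add_left m₀ k) rr hrrQ hrr1))
      choose q hqQ r hrQ hqr hd hν using hleft
      have hrmem : ∀ k, r k ∈ Set.Icc (0 : ℝ≥0) t := fun k => ⟨zero_le', Qtt_le (hrQ k)⟩
      obtain ⟨s, hsmem, φ, hφ, hconv⟩ :=
        (isCompact_Icc (a := (0:ℝ≥0)) (b := t)).tendsto_subseq hrmem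
      refine ⟨s, hsmem.2, ?_⟩
      rw [← ENNReal.ofReal_le_iff_le_toReal (measure_ne_top ν _)]
      refine le_meas_singleton_of_icc ν s (fun m => ?_)
      -- choose k₀ large enough
      set g : ℝ := ((invSeq m : ℝ≥0) : ℝ) with hg_def
      have hg : (0:ℝ) < g := real_invSeq_pos m
      have hhalfpos : (0:ℝ) < g / 2 := by linarith
      obtain ⟨K, hK⟩ := (Metric.tendsto_atTop.mp hconv) (g / 2) hhalfpos
      obtain ⟨M, hM⟩ := exists_nat_gt (2 / g)
      set k₀ := max K M with hk₀
      have hKk : dist ((r ∘ φ) k₀) s < g / 2 := hK k₀ (le_max_left _ _)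
      have hφk : ((invSeq (φ k₀) : ℝ≥0) : ℝ) ≤ g / 2 := by
        have h1 : M ≤ φ k₀ := le_trans (le_max_right K M) hφ.le_apply
        have h2 : ((invSeq (φ k₀) : ℝ≥0) : ℝ) ≤ ((invSeq M : ℝ≥0) : ℝ) := by
          exact_mod_cast invSeq_antitone h1
        refine h2.trans ?_
        rw [real_invSeq]
        have h3 : 2 / g < (M : ℝ) + 1 := hM.trans (lt_add_one _)
        have h4 : ((M:ℝ) + 1)⁻¹ < (2 / g)⁻¹ := by
          apply inv_strictAnti₀ (by positivity) h3
        rw [inv_div] at h4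
        exact h4.le
      -- real inequalities
      set k := φ k₀ with hk_def
      have hdistr : |((r k : ℝ≥0) : ℝ) - ((s : ℝ≥0) : ℝ)| < g / 2 := by
        have := hKk
        rw [Function.comp_apply, NNReal.dist_eq] at this
        exact this
      have hrq : ((r k : ℝ≥0) : ℝ) - ((q k : ℝ≥0) : ℝ) < g / 2 := lt_of_lt_of_le (hd k) hφk
      have hrups : ((r k : ℝ≥0) : ℝ) ≤ (s : ℝ) + g := by
        have h1 : ((r k : ℝ≥0) : ℝ) - (s:ℝ) < g / 2 := lt_of_abs_lt hdistr
        linarith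
      have hslow : (s : ℝ) ≤ ((q k : ℝ≥0) : ℝ) + g := by
        have h0 : |(s : ℝ) - ((r k : ℝ≥0) : ℝ)| < g / 2 := by
          rw [abs_sub_comm]; exact hdistr
        have h1 : (s:ℝ) - ((r k : ℝ≥0) : ℝ) < g / 2 := lt_of_abs_lt h0
        linarith
      -- now in ℝ≥0∞
      have hrups' : ((r k : ℝ≥0) : ℝ≥0∞) ≤ (s : ℝ≥0∞) + invSeq m := by
        have : (r k : ℝ≥0) ≤ s + invSeq m := by
          rw [← NNReal.coe_le_coe]
          push_cast
          exact hrups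
        exact_mod_cast this
      have hslow' : (s : ℝ≥0∞) - invSeq m ≤ ((q k : ℝ≥0) : ℝ≥0∞) := by
        rw [tsub_le_iff_right]
        have : s ≤ q k + invSeq m := by
          rw [← NNReal.coe_le_coe]
          push_cast
          exact hslow
        exact_mod_cast this
      have hsub : Set.Ioc ((q k : ℝ≥0) : ℝ≥0∞) ((r k : ℝ≥0) : ℝ≥0∞) ⊆
          Set.Icc ((s : ℝ≥0∞) - invSeq m) ((s : ℝ≥0∞) + invSeq m) := by
        intro x hx
        exact ⟨hslow'.trans hx.1.le, hx.2.trans hrups'⟩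
      refine le_trans ?_ (measure_mono hsub)
      rw [ENNReal.ofReal_le_iff_le_toReal (measure_ne_top ν _)]
      exact hν k

end AtomChar
section Continuity

lemma meas_Ioi_split (ν : Measure ℝ≥0∞) [IsFiniteMeasure ν] {a b : ℝ≥0} (hab : a ≤ b) :
    (ν (Set.Ioi (a : ℝ≥0∞))).toReal
      = (ν (Set.Ioc (a : ℝ≥0∞) (b : ℝ≥0∞))).toReal + (ν (Set.Ioi (b : ℝ≥0∞))).toReal := by
  have hdisj : Disjoint (Set.Ioc (a : ℝ≥0∞) (b : ℝ≥0∞)) (Set.Ioi (b : ℝ≥0∞)) :=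
    Set.disjoint_left.mpr fun x hx hx' => absurd hx.2 (not_le.mpr hx')
  have hunion : Set.Ioc (a : ℝ≥0∞) (b : ℝ≥0∞) ∪ Set.Ioi (b : ℝ≥0∞) = Set.Ioi (a : ℝ≥0∞) :=
    Set.Ioc_union_Ioi_eq_Ioi (ENNReal.coe_le_coe.mpr hab)
  rw [← hunion, measure_union hdisj measurableSet_Ioi,
    ENNReal.toReal_add (measure_ne_top ν _) (measure_ne_top ν _)]

lemma antitone_survival (ν : Measure ℝ≥0∞) [IsFiniteMeasure ν] :
    Antitone fun t : ℝ≥0 => (ν (Set.Ioi (t : ℝ≥0∞))).toReal := by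
  intro a b hab
  exact ENNReal.toReal_mono (measure_ne_top ν _)
    (measure_mono (Set.Ioi_subset_Ioi (ENNReal.coe_le_coe.mpr hab)))

lemma continuous_survival (ν : Measure ℝ≥0∞) [IsFiniteMeasure ν]
    (hna : ∀ s : ℝ≥0, ν {(s : ℝ≥0∞)} = 0) :
    Continuous fun t : ℝ≥0 => (ν (Set.Ioi (t : ℝ≥0∞))).toReal := by
  rw [Metric.continuous_iff]
  intro t ε hε
  have h0 : ν {(t : ℝ≥0∞)} < ENNReal.ofReal ε := by
    rw [hna t]; exact ENNReal.ofReal_pos.mpr hε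
  obtain ⟨m, hm⟩ := ((tendsto_meas_Icc ν t).eventually_lt_const h0).exists
  set e : ℝ≥0 := invSeq m with he_def
  have hepos : (0:ℝ) < (e : ℝ) := real_invSeq_pos m
  refine ⟨(e : ℝ) / 2, by linarith, fun u hu => ?_⟩
  rw [NNReal.dist_eq] at hu
  rw [Real.dist_eq]
  have hIcc : ∀ a b : ℝ≥0, a ≤ b → ((b : ℝ) ≤ (t : ℝ) + e) → ((t : ℝ) ≤ (a : ℝ) + e) →
      (ν (Set.Ioc (a : ℝ≥0∞) (b : ℝ≥0∞))).toReal < ε := by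
    intro a b hab hb ha
    have hsub : Set.Ioc (a : ℝ≥0∞) (b : ℝ≥0∞) ⊆
        Set.Icc ((t : ℝ≥0∞) - e) ((t : ℝ≥0∞) + e) := by
      intro x hx
      constructor
      · refine le_trans ?_ hx.1.le
        rw [tsub_le_iff_right]
        have : t ≤ a + e := by rw [← NNReal.coe_le_coe]; push_cast; exact ha
        exact_mod_cast this
      · refine hx.2.trans ?_
        have : b ≤ t + e := by rw [← NNReal.coe_le_coe]; push_cast; exact hb
        exact_mod_cast this
    have h1 : ν (Set.Ioc (a : ℝ≥0∞) (b : ℝ≥0∞)) < ENNReal.ofReal ε :=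
      lt_of_le_of_lt (measure_mono hsub) hm
    rw [ENNReal.lt_ofReal_iff_toReal_lt (measure_ne_top ν _)] at h1
    exact h1
  rcases le_total u t with hut | htu
  · have hkey := meas_Ioi_split ν hut
    have hnn : 0 ≤ (ν (Set.Ioc (u : ℝ≥0∞) (t : ℝ≥0∞))).toReal := ENNReal.toReal_nonneg
    rw [abs_of_nonneg (by linarith)]
    have : (ν (Set.Ioi (u:ℝ≥0∞))).toReal - (ν (Set.Ioi (t:ℝ≥0∞))).toReal
        = (ν (Set.Ioc (u : ℝ≥0∞) (t : ℝ≥0∞))).toReal := by linarith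
    rw [this]
    refine hIcc u t hut (by linarith) ?_
    have habs : (t : ℝ) - u < (e : ℝ) / 2 := by
      have := lt_of_abs_lt (abs_sub_comm ((u:ℝ)) ((t:ℝ)) ▸ hu)
      linarith
    linarith
  · have hkey := meas_Ioi_split ν htu
    have hnn : 0 ≤ (ν (Set.Ioc (t : ℝ≥0∞) (u : ℝ≥0∞))).toReal := ENNReal.toReal_nonneg
    rw [abs_of_nonpos (by linarith)]
    have : -((ν (Set.Ioi (u:ℝ≥0∞))).toReal - (ν (Set.Ioi (t:ℝ≥0∞))).toReal)
        = (ν (Set.Ioc (t : ℝ≥0∞) (u : ℝ≥0∞))).toReal := by linarith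
    rw [this]
    refine hIcc t u htu ?_ (by linarith)
    have habs : (u : ℝ) - t < (e : ℝ) / 2 := lt_of_abs_lt hu
    linarith

lemma finite_atoms (ν : Measure ℝ≥0∞) [IsFiniteMeasure ν] {ε : ℝ} (hε : 0 < ε) :
    Set.Finite {x : ℝ≥0∞ | ε ≤ (ν {x}).toReal} := by
  by_contra hinf
  have hinf' : {x : ℝ≥0∞ | ε ≤ (ν {x}).toReal}.Infinite := hinf
  set f := hinf'.natEmbedding with hf
  have hdisj : Pairwise (Function.onFun Disjoint fun n : ℕ => ({((f n : _) : ℝ≥0∞)} : Set ℝ≥0∞)) := by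
    intro n m hnm
    refine Set.disjoint_singleton.mpr fun hc => hnm (f.injective (Subtype.ext hc))
  have hmeas := measure_iUnion (μ := ν) hdisj (fun n => measurableSet_singleton _)
  have hlow : ∀ n : ℕ, ENNReal.ofReal ε ≤ ν {((f n : _) : ℝ≥0∞)} := by
    intro n
    rw [ENNReal.ofReal_le_iff_le_toReal (measure_ne_top ν _)]
    exact (f n).2
  have htop : (⊤ : ℝ≥0∞) ≤ ν (⋃ n : ℕ, ({((f n : _) : ℝ≥0∞)} : Set ℝ≥0∞)) := by
    rw [hmeas]
    refine le_trans (le_of_eq ?_) (ENNReal.tsum_le_tsum hlow)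
    exact (ENNReal.tsum_const_eq_top_of_ne_zero
      (by simpa using (ENNReal.ofReal_pos.mpr hε).ne')).symm
  exact absurd (lt_of_le_of_lt htop (measure_lt_top ν _)) (lt_irrefl _)

end Continuity
section Kernel

open ProbabilityTheory

lemma disintegration_condDistrib {β : Type*} [mβ : MeasurableSpace β]
    {mΩ : MeasurableSpace Ω} {X : Ω → β} (P : Measure Ω) [IsFiniteMeasure P]
    (hX : Measurable X) {τ : Ω → ℝ≥0∞} (hτ : Measurable τ)
    {W : Set (β × ℝ≥0∞)} (hW : MeasurableSet W) :
    P {ω | (X ω, τ ω) ∈ W} = ∫⁻ ω, condDistrib τ X P (X ω) (Prod.mk (X ω) ⁻¹' W) ∂P := by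
  have hpair : Measurable fun ω => (X ω, τ ω) := hX.prodMk hτ
  have h1 : P {ω | (X ω, τ ω) ∈ W} = (P.map fun ω => (X ω, τ ω)) W := by
    rw [Measure.map_apply hpair hW]; rfl
  have hdis : (P.map X) ⊗ₘ condDistrib τ X P = P.map fun ω => (X ω, τ ω) := by
    rw [condDistrib_def, ← Measure.fst_map_prodMk (X := X) hτ]
    exact Measure.disintegrate _ _
  rw [h1, ← hdis, Measure.compProd_apply hW,
    lintegral_map (Kernel.measurable_kernel_prodMk_left hW) hX]

end Kernel
section SigmaT

open TopologicalSpace ProbabilityTheory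

lemma meas_Iic_split (ν : Measure ℝ≥0∞) [IsFiniteMeasure ν] {a b : ℝ≥0} (hab : a < b) :
    (ν (Set.Iic (b : ℝ≥0∞))).toReal
      = (ν (Set.Iic (a : ℝ≥0∞))).toReal + (ν (Set.Ioc (a : ℝ≥0∞) (b : ℝ≥0∞))).toReal := by
  have hdisj : Disjoint (Set.Iic (a : ℝ≥0∞)) (Set.Ioc (a : ℝ≥0∞) (b : ℝ≥0∞)) :=
    Set.disjoint_left.mpr fun x hx hx' => absurd hx'.1 (not_lt.mpr hx)
  have hunion : Set.Iic (a : ℝ≥0∞) ∪ Set.Ioc (a : ℝ≥0∞) (b : ℝ≥0∞) = Set.Iic (b : ℝ≥0∞) :=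
    Set.Iic_union_Ioc_eq_Iic (ENNReal.coe_le_coe.mpr hab.le)
  rw [← hunion, measure_union hdisj measurableSet_Ioc,
    ENNReal.toReal_add (measure_ne_top ν _) (measure_ne_top ν _)]

lemma exists_invSeq_le {x : ℝ} (hx : 0 < x) : ∃ n : ℕ, ((invSeq n : ℝ≥0) : ℝ) ≤ x := by
  obtain ⟨n, hn⟩ := exists_nat_gt (1 / x)
  refine ⟨n, ?_⟩
  rw [real_invSeq]
  have h1 : 1 / x < (n : ℝ) + 1 := hn.trans (lt_add_one _)
  have h2 : ((n:ℝ) + 1)⁻¹ < (1 / x)⁻¹ := inv_strictAnti₀ (by positivity) h1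
  rw [one_div, inv_inv] at h2
  exact h2.le

lemma measurable_of_le_coe {α : Type*} {m : MeasurableSpace α} {f : α → ℝ≥0∞}
    (h : ∀ t : ℝ≥0, MeasurableSet[m] {ω | f ω ≤ (t : ℝ≥0∞)}) :
    @Measurable α ℝ≥0∞ m _ f := by
  apply measurable_of_Iio
  intro x
  have hd : Dense (Set.range (denseSeq ℝ≥0)) := denseRange_denseSeq ℝ≥0
  have hset : f ⁻¹' Set.Iio x = ⋃ n : ℕ,
      {ω | ((denseSeq ℝ≥0 n : ℝ≥0) : ℝ≥0∞) < x ∧ f ω ≤ ((denseSeq ℝ≥0 n : ℝ≥0) : ℝ≥0∞)} := by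
    ext ω
    simp only [Set.mem_preimage, Set.mem_Iio, Set.mem_iUnion, Set.mem_setOf_eq]
    constructor
    · intro hfx
      have hne : f ω ≠ ∞ := hfx.ne_top
      set a : ℝ≥0 := (f ω).toNNReal with ha
      have hfa : f ω = (a : ℝ≥0∞) := (ENNReal.coe_toNNReal hne).symm
      rcases eq_or_ne x ∞ with hx | hx
      · obtain ⟨z, hz, hz2⟩ := hd.exists_between (lt_add_one a)
        obtain ⟨n, hn⟩ := hz
        refine ⟨n, ?_, ?_⟩
        · rw [hn, hx]; exact ENNReal.coe_lt_top
        · rw [hn, hfa]; exact_mod_cast hz2.1.le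
      · set b : ℝ≥0 := x.toNNReal with hb
        have hxb : x = (b : ℝ≥0∞) := (ENNReal.coe_toNNReal hx).symm
        have hab : a < b := by
          rw [hfa, hxb] at hfx; exact_mod_cast hfx
        obtain ⟨z, hz, hz2⟩ := hd.exists_between hab
        obtain ⟨n, hn⟩ := hz
        refine ⟨n, ?_, ?_⟩
        · rw [hn, hxb]; exact_mod_cast hz2.2
        · rw [hn, hfa]; exact_mod_cast hz2.1.le
    · rintro ⟨n, h1, h2⟩; exact lt_of_le_of_lt h2 h1
  rw [hset]
  refine MeasurableSet.iUnion fun n => ?_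
  by_cases hc : ((denseSeq ℝ≥0 n : ℝ≥0) : ℝ≥0∞) < x
  · have : {ω | ((denseSeq ℝ≥0 n : ℝ≥0) : ℝ≥0∞) < x ∧ f ω ≤ ((denseSeq ℝ≥0 n : ℝ≥0) : ℝ≥0∞)}
        = {ω | f ω ≤ ((denseSeq ℝ≥0 n : ℝ≥0) : ℝ≥0∞)} := by
      ext ω; simp [hc]
    rw [this]; exact h _
  · have : {ω | ((denseSeq ℝ≥0 n : ℝ≥0) : ℝ≥0∞) < x ∧ f ω ≤ ((denseSeq ℝ≥0 n : ℝ≥0) : ℝ≥0∞)}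
        = ∅ := by
      ext ω; simp [hc]
    rw [this]; exact MeasurableSet.empty

/-- First time at which a measure on `ℝ≥0∞` has an atom of mass `≥ ε`. -/
noncomputable def atomTime (ε : ℝ) (ν : Measure ℝ≥0∞) : ℝ≥0∞ :=
  sInf {x : ℝ≥0∞ | x ≠ ∞ ∧ ε ≤ (ν {x}).toReal}

/-- First time at which the tail of a measure on `ℝ≥0∞` vanishes. -/
noncomputable def tailTime (ν : Measure ℝ≥0∞) : ℝ≥0∞ :=
  sInf {x : ℝ≥0∞ | ν (Set.Ioi x) = 0}

lemma atomTime_le_iff {ε : ℝ} (hε : 0 < ε) (t : ℝ≥0) (ν : Measure ℝ≥0∞) [IsFiniteMeasure ν] :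
    atomTime ε ν ≤ (t : ℝ≥0∞) ↔ ∃ s : ℝ≥0, s ≤ t ∧ ε ≤ (ν {(s : ℝ≥0∞)}).toReal := by
  constructor
  · intro hle
    rcases Set.eq_empty_or_nonempty {x : ℝ≥0∞ | x ≠ ∞ ∧ ε ≤ (ν {x}).toReal} with he | hne
    · rw [atomTime, he, sInf_empty] at hle
      exact absurd hle (not_le.mpr (ENNReal.coe_lt_top))
    · have hfin : {x : ℝ≥0∞ | x ≠ ∞ ∧ ε ≤ (ν {x}).toReal}.Finite :=
        (finite_atoms ν hε).subset fun x hx => hx.2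
      have hmem := hne.csInf_mem hfin
      have hne' : atomTime ε ν ≠ ∞ := hmem.1
      refine ⟨(atomTime ε ν).toNNReal, ?_, ?_⟩
      · rw [← ENNReal.coe_le_coe, ENNReal.coe_toNNReal hne']; exact hle
      · rw [ENNReal.coe_toNNReal hne']; exact hmem.2
  · rintro ⟨s, hst, hs⟩
    refine le_trans (sInf_le ⟨ENNReal.coe_ne_top, hs⟩) ?_
    exact_mod_cast hst

lemma atomTime_atom {ε : ℝ} (hε : 0 < ε) (ν : Measure ℝ≥0∞) [IsFiniteMeasure ν]
    (hne : atomTime ε ν ≠ ∞) : ENNReal.ofReal ε ≤ ν {atomTime ε ν} := by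
  rcases Set.eq_empty_or_nonempty {x : ℝ≥0∞ | x ≠ ∞ ∧ ε ≤ (ν {x}).toReal} with he | hne'
  · rw [atomTime, he, sInf_empty] at hne; exact absurd rfl hne
  · have hfin : {x : ℝ≥0∞ | x ≠ ∞ ∧ ε ≤ (ν {x}).toReal}.Finite :=
      (finite_atoms ν hε).subset fun x hx => hx.2
    have hmem := hne'.csInf_mem hfin
    rw [ENNReal.ofReal_le_iff_le_toReal (measure_ne_top _ _)]
    exact hmem.2

lemma atom_zero_of_atomTime_top {ν : Measure ℝ≥0∞} [IsFiniteMeasure ν]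
    (h : ∀ n : ℕ, atomTime ((invSeq n : ℝ≥0) : ℝ) ν = ∞) (s : ℝ≥0) :
    ν {(s : ℝ≥0∞)} = 0 := by
  by_contra hc
  have hpos : 0 < (ν {(s : ℝ≥0∞)}).toReal := ENNReal.toReal_pos hc (measure_ne_top _ _)
  obtain ⟨n, hn⟩ := exists_invSeq_le hpos
  have hmem : (s : ℝ≥0∞) ∈ {x : ℝ≥0∞ | x ≠ ∞ ∧ ((invSeq n : ℝ≥0) : ℝ) ≤ (ν {x}).toReal} :=
    ⟨ENNReal.coe_ne_top, hn⟩
  have hsle := sInf_le hmem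
  rw [← atomTime] at hsle
  rw [h n] at hsle
  exact absurd hsle (not_le.mpr ENNReal.coe_lt_top)

lemma tailTime_upward {ν : Measure ℝ≥0∞} {x y : ℝ≥0∞} (hxy : x ≤ y)
    (hx : ν (Set.Ioi x) = 0) : ν (Set.Ioi y) = 0 :=
  measure_mono_null (Set.Ioi_subset_Ioi hxy) hx

lemma Ioi_zero_of_tailTime_lt {ν : Measure ℝ≥0∞} {x : ℝ≥0∞} (hx : tailTime ν < x) :
    ν (Set.Ioi x) = 0 := by
  obtain ⟨y, hy, hyx⟩ := sInf_lt_iff.mp hx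
  exact tailTime_upward hyx.le hy

lemma Ioi_ne_zero_of_lt_tailTime {ν : Measure ℝ≥0∞} {x : ℝ≥0∞} (hx : x < tailTime ν) :
    ν (Set.Ioi x) ≠ 0 := by
  intro hc
  exact absurd (sInf_le (Set.mem_setOf_eq ▸ hc)) (not_le.mpr hx)

lemma Ioi_tailTime_zero {ν : Measure ℝ≥0∞} (hb : tailTime ν ≠ ∞) :
    ν (Set.Ioi (tailTime ν)) = 0 := by
  set T := tailTime ν with hT
  have hunion : Set.Ioi T = ⋃ n : ℕ, Set.Ioi (T + ((invSeq n : ℝ≥0) : ℝ≥0∞)) := by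
    ext x
    simp only [Set.mem_Ioi, Set.mem_iUnion]
    constructor
    · intro hx
      have hne : x - T ≠ 0 := fun hc => absurd (tsub_eq_zero_iff_le.mp hc) (not_le.mpr hx)
      obtain ⟨n, hn⟩ := ENNReal.exists_inv_nat_lt hne
      refine ⟨n, ?_⟩
      have h1 : ((invSeq n : ℝ≥0) : ℝ≥0∞) < x - T :=
        lt_of_le_of_lt (coe_invSeq_le_inv_nat n) hn
      calc T + ((invSeq n : ℝ≥0) : ℝ≥0∞) < T + (x - T) := ENNReal.add_lt_add_left hb h1
        _ = x := add_tsub_cancel_of_le hx.le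
    · rintro ⟨n, hn⟩
      refine lt_of_le_of_lt ?_ hn
      exact le_self_add
  rw [hunion]
  refine measure_iUnion_null fun n => ?_
  refine Ioi_zero_of_tailTime_lt ?_
  rw [← hT]
  exact ENNReal.lt_add_right hb (by exact_mod_cast (invSeq_pos n).ne')

lemma tailTime_le_coe_iff (t : ℝ≥0) (ν : Measure ℝ≥0∞) :
    tailTime ν ≤ (t : ℝ≥0∞) ↔ ∀ n : ℕ, ν (Set.Ioi ((t : ℝ≥0∞) + invSeq n)) = 0 := by
  constructor
  · intro h n
    refine Ioi_zero_of_tailTime_lt (lt_of_le_of_lt h ?_)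
    exact ENNReal.lt_add_right ENNReal.coe_ne_top (by exact_mod_cast (invSeq_pos n).ne')
  · intro h
    have hle : ∀ n : ℕ, tailTime ν ≤ (t : ℝ≥0∞) + invSeq n := fun n => sInf_le (h n)
    refine ENNReal.le_of_forall_pos_le_add fun δ hδ hfin => ?_
    obtain ⟨n, hn⟩ := exists_invSeq_le (x := (δ : ℝ)) (by exact_mod_cast hδ)
    refine (hle n).trans (add_le_add_right ?_ _)
    exact_mod_cast hn

section KernelMeasurability

variable {β : Type*} [mβ : MeasurableSpace β] (κ : ProbabilityTheory.Kernel β ℝ≥0∞)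
  [ProbabilityTheory.IsMarkovKernel κ]

lemma measurableSet_atomTime_le {ε : ℝ} (hε : 0 < ε) (t : ℝ≥0) :
    MeasurableSet {b | atomTime ε (κ b) ≤ (t : ℝ≥0∞)} := by
  have hset : {b | atomTime ε (κ b) ≤ (t : ℝ≥0∞)} = ⋂ k : ℕ,
      ((⋃ q ∈ Qtt t, ⋃ r ∈ Qtt t, {b | q < r ∧ (r : ℝ) - (q : ℝ) < ((invSeq k : ℝ≥0) : ℝ) ∧
          ε ≤ ((κ b) (Set.Ioc (q : ℝ≥0∞) (r : ℝ≥0∞))).toReal}) ∪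
        (⋃ r ∈ Qtt t, {b | (r : ℝ) < ((invSeq k : ℝ≥0) : ℝ) ∧
          ε ≤ ((κ b) (Set.Iic (r : ℝ≥0∞))).toReal})) := by
    ext b
    rw [Set.mem_setOf_eq, atomTime_le_iff hε t (κ b), exists_atom_iff (κ b) t ε hε]
    simp only [Set.mem_iInter, Set.mem_union, Set.mem_iUnion, Set.mem_setOf_eq]
    constructor
    · intro h k
      rcases h k with ⟨q, hq, r, hr, h1, h2, h3⟩ | ⟨r, hr, h1, h2⟩
      · exact Or.inl ⟨q, hq, r, hr, h1, h2, h3⟩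
      · exact Or.inr ⟨r, hr, h1, h2⟩
    · intro h k
      rcases h k with ⟨q, hq, r, hr, h1, h2, h3⟩ | ⟨r, hr, h1, h2⟩
      · exact Or.inl ⟨q, hq, r, hr, h1, h2, h3⟩
      · exact Or.inr ⟨r, hr, h1, h2⟩
  rw [hset]
  refine MeasurableSet.iInter fun k => MeasurableSet.union ?_ ?_
  · refine MeasurableSet.biUnion (Qtt_countable t) fun q hq => ?_
    refine MeasurableSet.biUnion (Qtt_countable t) fun r hr => ?_
    by_cases h1 : q < r ∧ (r : ℝ) - (q : ℝ) < ((invSeq k : ℝ≥0) : ℝ)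
    · have heq : {b | q < r ∧ (r : ℝ) - (q : ℝ) < ((invSeq k : ℝ≥0) : ℝ) ∧
          ε ≤ ((κ b) (Set.Ioc (q : ℝ≥0∞) (r : ℝ≥0∞))).toReal}
          = (fun b => ((κ b) (Set.Ioc (q : ℝ≥0∞) (r : ℝ≥0∞))).toReal) ⁻¹' Set.Ici ε := by
        ext b; simp [h1.1, h1.2, Set.mem_Ici]
      rw [heq]
      exact ((κ.measurable_coe measurableSet_Ioc).ennreal_toReal) measurableSet_Ici
    · have heq : {b | q < r ∧ (r : ℝ) - (q : ℝ) < ((invSeq k : ℝ≥0) : ℝ) ∧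
          ε ≤ ((κ b) (Set.Ioc (q : ℝ≥0∞) (r : ℝ≥0∞))).toReal} = ∅ := by
        ext b
        simp only [Set.mem_setOf_eq, Set.mem_empty_iff_false, iff_false]
        intro hc
        exact h1 ⟨hc.1, hc.2.1⟩
      rw [heq]; exact MeasurableSet.empty
  · refine MeasurableSet.biUnion (Qtt_countable t) fun r hr => ?_
    by_cases h1 : (r : ℝ) < ((invSeq k : ℝ≥0) : ℝ)
    · have heq : {b | (r : ℝ) < ((invSeq k : ℝ≥0) : ℝ) ∧
          ε ≤ ((κ b) (Set.Iic (r : ℝ≥0∞))).toReal}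
          = (fun b => ((κ b) (Set.Iic (r : ℝ≥0∞))).toReal) ⁻¹' Set.Ici ε := by
        ext b; simp [h1, Set.mem_Ici]
      rw [heq]
      exact ((κ.measurable_coe measurableSet_Iic).ennreal_toReal) measurableSet_Ici
    · have heq : {b | (r : ℝ) < ((invSeq k : ℝ≥0) : ℝ) ∧
          ε ≤ ((κ b) (Set.Iic (r : ℝ≥0∞))).toReal} = ∅ := by
        ext b
        simp only [Set.mem_setOf_eq, Set.mem_empty_iff_false, iff_false]
        intro hc
        exact h1 hc.1
      rw [heq]; exact MeasurableSet.empty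

lemma measurable_atomTime {ε : ℝ} (hε : 0 < ε) : Measurable fun b => atomTime ε (κ b) :=
  measurable_of_le_coe fun t => measurableSet_atomTime_le κ hε t

lemma measurable_tailTime : Measurable fun b => tailTime (κ b) := by
  refine measurable_of_le_coe fun t => ?_
  have hset : {b | tailTime (κ b) ≤ (t : ℝ≥0∞)}
      = ⋂ n : ℕ, (fun b => (κ b) (Set.Ioi ((t : ℝ≥0∞) + invSeq n))) ⁻¹' {0} := by
    ext b
    simp only [Set.mem_setOf_eq, Set.mem_iInter, Set.mem_preimage, Set.mem_singleton_iff]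
    exact tailTime_le_coe_iff t (κ b)
  rw [hset]
  exact MeasurableSet.iInter fun n =>
    (κ.measurable_coe measurableSet_Ioi) (measurableSet_singleton 0)

end KernelMeasurability

end SigmaT
section NullLemmas

open ProbabilityTheory

lemma avoid_null {β : Type*} [mβ : MeasurableSpace β] {mΩ : MeasurableSpace Ω}
    (P : Measure Ω) [IsFiniteMeasure P] {X : Ω → β} (hX : Measurable X)
    {τ : Ω → ℝ≥0∞} (hτ : Measurable τ) {σ' : β → ℝ≥0∞} (hσ : Measurable σ')
    {ε : ℝ} (hε : 0 < ε)
    (hatom : ∀ b, σ' b ≠ ∞ → ENNReal.ofReal ε ≤ condDistrib τ X P b {σ' b})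
    (hnull : P {ω | τ ω = σ' (X ω) ∧ σ' (X ω) ≠ ∞} = 0) :
    P {ω | σ' (X ω) ≠ ∞} = 0 := by
  set W : Set (β × ℝ≥0∞) := {p | p.2 = σ' p.1 ∧ σ' p.1 ≠ ∞} with hW_def
  have hW : MeasurableSet W := by
    rw [hW_def, Set.setOf_and]
    refine MeasurableSet.inter ?_ ?_
    · have heq : {p : β × ℝ≥0∞ | p.2 = σ' p.1}
          = {p : β × ℝ≥0∞ | p.2 ≤ σ' p.1} ∩ {p : β × ℝ≥0∞ | σ' p.1 ≤ p.2} := by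
        ext p; simp [le_antisymm_iff]
      rw [heq]
      exact (measurableSet_le measurable_snd (hσ.comp measurable_fst)).inter
        (measurableSet_le (hσ.comp measurable_fst) measurable_snd)
    · exact (hσ.comp measurable_fst) ((measurableSet_singleton ∞).compl)
  have hdis := disintegration_condDistrib P hX hτ hW
  have heq : {ω | (X ω, τ ω) ∈ W} = {ω | τ ω = σ' (X ω) ∧ σ' (X ω) ≠ ∞} := rfl
  rw [heq, hnull] at hdis
  have hmeasset : MeasurableSet {ω | σ' (X ω) ≠ ∞} :=
    (hσ.comp hX) ((measurableSet_singleton ∞).compl)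
  have hlow : ∀ ω, ({ω' | σ' (X ω') ≠ ∞}.indicator (fun _ => ENNReal.ofReal ε)) ω ≤
      condDistrib τ X P (X ω) (Prod.mk (X ω) ⁻¹' W) := by
    intro ω
    by_cases hω : σ' (X ω) ≠ ∞
    · have hpre : Prod.mk (X ω) ⁻¹' W = {σ' (X ω)} := by
        ext x
        simp only [Set.mem_preimage, hW_def, Set.mem_setOf_eq, Set.mem_singleton_iff]
        exact ⟨fun h => h.1, fun h => ⟨h, hω⟩⟩
      have hind : ({ω' | σ' (X ω') ≠ ∞}.indicator (fun _ => ENNReal.ofReal ε)) ω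
          = ENNReal.ofReal ε := Set.indicator_of_mem (show ω ∈ {ω' | σ' (X ω') ≠ ∞} from hω) _
      rw [hind, hpre]
      exact hatom (X ω) hω
    · have hind : ({ω' | σ' (X ω') ≠ ∞}.indicator (fun _ => ENNReal.ofReal ε)) ω
          = 0 := Set.indicator_of_notMem (show ω ∉ {ω' | σ' (X ω') ≠ ∞} from hω) _
      rw [hind]
      exact zero_le
  have hle := lintegral_mono (μ := P) hlow
  rw [← hdis] at hle
  rw [lintegral_indicator hmeasset, setLIntegral_const] at hle
  have h0 : ENNReal.ofReal ε * P {ω | σ' (X ω) ≠ ∞} = 0 := le_antisymm hle zero_le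
  rcases mul_eq_zero.mp h0 with h | h
  · exact absurd h (by simpa using (ENNReal.ofReal_pos.mpr hε).ne')
  · exact h

lemma tail_null {β : Type*} [mβ : MeasurableSpace β] {mΩ : MeasurableSpace Ω}
    (P : Measure Ω) [IsFiniteMeasure P] {X : Ω → β} (hX : Measurable X)
    {τ : Ω → ℝ≥0∞} (hτ : Measurable τ) {T' : β → ℝ≥0∞} (hT : Measurable T')
    (hzero : ∀ᵐ ω ∂P, T' (X ω) ≠ ∞ → condDistrib τ X P (X ω) (Set.Ici (T' (X ω))) = 0) :
    P {ω | T' (X ω) ≤ τ ω ∧ T' (X ω) ≠ ∞} = 0 := by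
  set W : Set (β × ℝ≥0∞) := {p | T' p.1 ≤ p.2 ∧ T' p.1 ≠ ∞} with hW_def
  have hW : MeasurableSet W := by
    rw [hW_def, Set.setOf_and]
    refine MeasurableSet.inter ?_ ?_
    · exact measurableSet_le (hT.comp measurable_fst) measurable_snd
    · exact (hT.comp measurable_fst) ((measurableSet_singleton ∞).compl)
  have hdis := disintegration_condDistrib P hX hτ hW
  have heq : {ω | (X ω, τ ω) ∈ W} = {ω | T' (X ω) ≤ τ ω ∧ T' (X ω) ≠ ∞} := rfl
  rw [heq] at hdis
  rw [hdis]
  have hae : (fun ω => condDistrib τ X P (X ω) (Prod.mk (X ω) ⁻¹' W)) =ᵐ[P] 0 := by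
    filter_upwards [hzero] with ω hz
    by_cases hω : T' (X ω) ≠ ∞
    · have hpre : Prod.mk (X ω) ⁻¹' W = Set.Ici (T' (X ω)) := by
        ext x
        simp only [Set.mem_preimage, hW_def, Set.mem_setOf_eq, Set.mem_Ici]
        exact ⟨fun h => h.1, fun h => ⟨h, hω⟩⟩
      rw [hpre]
      exact hz hω
    · have hpre : Prod.mk (X ω) ⁻¹' W = ∅ := by
        ext x
        simp only [Set.mem_preimage, hW_def, Set.mem_setOf_eq, Set.mem_empty_iff_false,
          iff_false]
        intro hc
        exact hω hc.2
      rw [hpre]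
      exact measure_empty
  rw [lintegral_congr_ae hae]
  exact lintegral_zero

lemma stopping_aux {β : Type*} [mβ : MeasurableSpace β] {mΩ : MeasurableSpace Ω}
    {P : Measure Ω} [IsProbabilityMeasure P]
    (κ : ProbabilityTheory.Kernel β ℝ≥0∞) [ProbabilityTheory.IsMarkovKernel κ] {X : Ω → β}
    {Ft : MeasurableSpace Ω}
    (hcomplete : ∀ s : Set Ω, P s = 0 → MeasurableSet[Ft] s)
    {t : ℝ≥0} {ε : ℝ} (hε : 0 < ε)
    (f : ℝ≥0 → Ω → ℝ)
    (hfmeas : ∀ q ∈ Qtt t, Measurable[Ft] (f q))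
    (hfae : ∀ q ∈ Qtt t, f q =ᵐ[P] fun ω => ((κ (X ω)) (Set.Iic (q : ℝ≥0∞))).toReal) :
    MeasurableSet[Ft] {ω | atomTime ε (κ (X ω)) ≤ (t : ℝ≥0∞)} := by
  classical
  set N : Set Ω := ⋃ q ∈ Qtt t, {ω | f q ω ≠ ((κ (X ω)) (Set.Iic (q : ℝ≥0∞))).toReal}
    with hN_def
  have hN : P N = 0 := by
    refine (measure_biUnion_null_iff (Qtt_countable t)).mpr fun q hq => ?_
    exact ae_iff.mp (hfae q hq)
  set C : Set Ω := ⋂ k : ℕ,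
      ((⋃ q ∈ Qtt t, ⋃ r ∈ Qtt t, {ω | q < r ∧ (r : ℝ) - (q : ℝ) < ((invSeq k : ℝ≥0) : ℝ) ∧
          ε ≤ f r ω - f q ω}) ∪
        (⋃ r ∈ Qtt t, {ω | (r : ℝ) < ((invSeq k : ℝ≥0) : ℝ) ∧ ε ≤ f r ω})) with hC_def
  have hCmeas : MeasurableSet[Ft] C := by
    refine MeasurableSet.iInter fun k => MeasurableSet.union ?_ ?_
    · refine MeasurableSet.biUnion (Qtt_countable t) fun q hq => ?_
      refine MeasurableSet.biUnion (Qtt_countable t) fun r hr => ?_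
      by_cases h1 : q < r ∧ (r : ℝ) - (q : ℝ) < ((invSeq k : ℝ≥0) : ℝ)
      · have heq : {ω | q < r ∧ (r : ℝ) - (q : ℝ) < ((invSeq k : ℝ≥0) : ℝ) ∧
            ε ≤ f r ω - f q ω} = {ω | ε ≤ f r ω - f q ω} := by
          ext ω; simp [h1.1, h1.2]
        rw [heq]
        exact measurableSet_le measurable_const ((hfmeas r hr).sub (hfmeas q hq))
      · have heq : {ω | q < r ∧ (r : ℝ) - (q : ℝ) < ((invSeq k : ℝ≥0) : ℝ) ∧
            ε ≤ f r ω - f q ω} = ∅ := by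
          ext ω
          simp only [Set.mem_setOf_eq, Set.mem_empty_iff_false, iff_false]
          intro hc
          exact h1 ⟨hc.1, hc.2.1⟩
        rw [heq]; exact MeasurableSet.empty
    · refine MeasurableSet.biUnion (Qtt_countable t) fun r hr => ?_
      by_cases h1 : (r : ℝ) < ((invSeq k : ℝ≥0) : ℝ)
      · have heq : {ω | (r : ℝ) < ((invSeq k : ℝ≥0) : ℝ) ∧ ε ≤ f r ω}
            = {ω | ε ≤ f r ω} := by
          ext ω; simp [h1]
        rw [heq]
        exact measurableSet_le measurable_const (hfmeas r hr)
      · have heq : {ω | (r : ℝ) < ((invSeq k : ℝ≥0) : ℝ) ∧ ε ≤ f r ω} = ∅ := by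
          ext ω
          simp only [Set.mem_setOf_eq, Set.mem_empty_iff_false, iff_false]
          intro hc
          exact h1 hc.1
        rw [heq]; exact MeasurableSet.empty
  have hagree : ∀ ω, ω ∉ N → (atomTime ε (κ (X ω)) ≤ (t : ℝ≥0∞) ↔ ω ∈ C) := by
    intro ω hωN
    have hfq : ∀ q ∈ Qtt t, f q ω = ((κ (X ω)) (Set.Iic (q : ℝ≥0∞))).toReal := by
      intro q hq
      by_contra hc
      exact hωN (Set.mem_biUnion hq hc)
    rw [atomTime_le_iff hε t (κ (X ω)), exists_atom_iff (κ (X ω)) t ε hε]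
    rw [hC_def]
    simp only [Set.mem_iInter, Set.mem_union, Set.mem_iUnion, Set.mem_setOf_eq]
    refine forall_congr' fun k => or_congr ?_ ?_
    · constructor
      · rintro ⟨q, hq, r, hr, h1, h2, h3⟩
        refine ⟨q, hq, r, hr, h1, h2, ?_⟩
        rw [hfq q hq, hfq r hr]
        have hsplit := meas_Iic_split (κ (X ω)) h1
        linarith
      · rintro ⟨q, hq, r, hr, h1, h2, h3⟩
        refine ⟨q, hq, r, hr, h1, h2, ?_⟩
        rw [hfq q hq, hfq r hr] at h3
        have hsplit := meas_Iic_split (κ (X ω)) h1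
        linarith
    · constructor
      · rintro ⟨r, hr, h1, h2⟩
        exact ⟨r, hr, h1, by rw [hfq r hr]; exact h2⟩
      · rintro ⟨r, hr, h1, h2⟩
        exact ⟨r, hr, h1, by rw [hfq r hr] at h2; exact h2⟩
  have hseteq : {ω | atomTime ε (κ (X ω)) ≤ (t : ℝ≥0∞)}
      = (C \ N) ∪ ({ω | atomTime ε (κ (X ω)) ≤ (t : ℝ≥0∞)} ∩ N) := by
    ext ω
    constructor
    · intro hω
      by_cases hN' : ω ∈ N
      · exact Or.inr ⟨hω, hN'⟩
      · exact Or.inl ⟨(hagree ω hN').mp hω, hN'⟩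
    · rintro (⟨hC', hN'⟩ | ⟨hω, _⟩)
      · exact (hagree ω hN').mpr hC'
      · exact hω
  rw [hseteq]
  exact (hCmeas.diff (hcomplete N hN)).union
    (hcomplete _ (measure_mono_null Set.inter_subset_right hN))

end NullLemmas
section Main

open ProbabilityTheory

/-- Under hypotheses (A) and (H), there is a version `A` of the Azéma
supermartingale of `τ` all of whose paths are continuous and nonincreasing with `A_0 = 1`,
and which is a.s. strictly positive on `[0, τ]`. -/
theorem azema_continuous_decreasing_positive_version
    {mΩ : MeasurableSpace Ω} (P : Measure Ω) [IsProbabilityMeasure P]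
    (F : MeasureTheory.Filtration ℝ≥0 mΩ)
    (hFrc : ∀ t : ℝ≥0, F t = ⨅ (ε : ℝ≥0) (_ : 0 < ε), F (t + ε))
    (hFcomplete : ∀ (t : ℝ≥0) (s : Set Ω), P s = 0 → MeasurableSet[F t] s)
    (τ : Ω → ℝ≥0∞) (hτmeas : Measurable τ) (hτpos : ∀ ω, 0 < τ ω)
    (hypA : HypothesisA P F τ) (hypH : HypothesisH P F τ) :
    ∃ A : ℝ≥0 → Ω → ℝ,
      (∀ t : ℝ≥0,
        A t =ᵐ[P] P[Set.indicator {ω | (t : ℝ≥0∞) < τ ω} (fun _ => (1 : ℝ)) | F t]) ∧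
      (∀ ω, Continuous fun s : ℝ≥0 => A s ω) ∧
      (∀ ω, Antitone fun s : ℝ≥0 => A s ω) ∧
      (∀ ω, A 0 ω = 1) ∧
      (∀ᵐ ω ∂P, ∀ t : ℝ≥0, (t : ℝ≥0∞) ≤ τ ω → 0 < A t ω) := by
  classical
  have hmsup : (⨆ s : ℝ≥0, F s) ≤ mΩ := iSup_le fun s => F.le s
  set κ : @ProbabilityTheory.Kernel Ω ℝ≥0∞ (⨆ s : ℝ≥0, F s) _ :=
    @ProbabilityTheory.condDistrib Ω Ω ℝ≥0∞ _ _ _ mΩ (⨆ s : ℝ≥0, F s) τ id P _ with hκ_def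
  have hMk : ProbabilityTheory.IsMarkovKernel κ := by rw [hκ_def]; infer_instance
  haveI := hMk
  have hProb : ∀ ω, IsProbabilityMeasure (κ ω) := fun ω => hMk.isProbabilityMeasure ω
  -- the conditional-distribution kernel is a version of the conditional expectations
  have hK1 : ∀ (s : Set ℝ≥0∞), MeasurableSet s →
      (fun ω => ((κ ω) s).toReal)
        =ᵐ[P] P[(τ ⁻¹' s).indicator (fun _ => (1 : ℝ)) | (⨆ u : ℝ≥0, F u)] := by
    intro s hs
    have h := @ProbabilityTheory.condDistrib_ae_eq_condExp Ω Ω ℝ≥0∞ _ _ _ mΩ P _ id τ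
      (⨆ u : ℝ≥0, F u) s (measurable_id'' hmsup) hτmeas hs
    rw [MeasurableSpace.comap_id] at h
    rw [hκ_def]
    exact h
  have hVer : ∀ q : ℝ≥0, (fun ω => ((κ ω) (Set.Iic (q : ℝ≥0∞))).toReal)
      =ᵐ[P] P[(τ ⁻¹' Set.Iic (q : ℝ≥0∞)).indicator (fun _ => (1 : ℝ)) | F q] := by
    intro q
    have h1 := hK1 (Set.Iic (q : ℝ≥0∞)) measurableSet_Iic
    have hle2 : natFiltDefault τ q ≤ enlTilde F τ q := le_sup_right
    have hBmem : MeasurableSet[enlTilde F τ q] (τ ⁻¹' Set.Iic (q : ℝ≥0∞)) :=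
      hle2 _ (measurableSet_tau_le_natFilt τ (le_refl q))
    have h2 := condexp_iSup_eq_condexp_filt hτmeas hypH q hBmem
    exact h1.trans h2
  have hGt : ∀ t : ℝ≥0, (fun ω => ((κ ω) (Set.Ioi (t : ℝ≥0∞))).toReal)
      =ᵐ[P] P[Set.indicator {ω | (t : ℝ≥0∞) < τ ω} (fun _ => (1 : ℝ)) | F t] := by
    intro t
    have h1 := hK1 (Set.Ioi (t : ℝ≥0∞)) measurableSet_Ioi
    have hBmem : MeasurableSet[enlTilde F τ t] (τ ⁻¹' Set.Ioi (t : ℝ≥0∞)) :=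
      measurableSet_tau_gt_enlTilde F τ (le_refl t)
    have h2 := condexp_iSup_eq_condexp_filt hτmeas hypH t hBmem
    exact h1.trans h2
  -- atom times are stopping times
  have hstop : ∀ (n : ℕ) (t : ℝ≥0),
      MeasurableSet[F t] {ω | atomTime ((invSeq n : ℝ≥0) : ℝ) (κ ω) ≤ (t : ℝ≥0∞)} := by
    intro n t
    refine stopping_aux (mβ := (⨆ s : ℝ≥0, F s)) (P := P) κ (X := id) (Ft := F t) (hFcomplete t)
      (real_invSeq_pos n)
      (fun q => P[(τ ⁻¹' Set.Iic (q : ℝ≥0∞)).indicator (fun _ => (1 : ℝ)) | F q]) ?_ ?_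
    · intro q hq
      exact (stronglyMeasurable_condExp.mono (F.mono (Qtt_le hq))).measurable
    · intro q hq
      exact (hVer q).symm
  -- hypothesis (A) kills all atoms
  have hσnull : ∀ n : ℕ, P {ω | atomTime ((invSeq n : ℝ≥0) : ℝ) (κ ω) ≠ ∞} = 0 := by
    intro n
    have hAva := hypA (fun ω => atomTime ((invSeq n : ℝ≥0) : ℝ) (κ ω)) (fun t => hstop n t)
    refine avoid_null (mβ := (⨆ s : ℝ≥0, F s)) P (measurable_id'' hmsup) hτmeas
      (measurable_atomTime (mβ := (⨆ s : ℝ≥0, F s)) κ (real_invSeq_pos n)) (real_invSeq_pos n) ?_ hAva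
    intro b hb
    rw [← hκ_def]
    exact atomTime_atom (real_invSeq_pos n) (κ b) hb
  have hE1 : P (⋃ n : ℕ, {ω | atomTime ((invSeq n : ℝ≥0) : ℝ) (κ ω) ≠ ∞}) = 0 :=
    measure_iUnion_null hσnull
  have hE1ae : ∀ᵐ ω ∂P, ∀ n : ℕ, atomTime ((invSeq n : ℝ≥0) : ℝ) (κ ω) = ∞ := by
    rw [ae_iff]
    refine measure_mono_null ?_ hE1
    intro ω hω
    simp only [Set.mem_setOf_eq, not_forall] at hω
    obtain ⟨n, hn⟩ := hω
    exact Set.mem_iUnion.mpr ⟨n, hn⟩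
  -- the tail is a.s. not reached
  have hE2null : P {ω | tailTime (κ ω) ≤ τ ω ∧ tailTime (κ ω) ≠ ∞} = 0 := by
    have hzero : ∀ᵐ ω ∂P, tailTime (κ (id ω)) ≠ ∞ →
        (κ (id ω)) (Set.Ici (tailTime (κ (id ω)))) = 0 := by
      filter_upwards [hE1ae] with ω hω hne
      have hna : ∀ s : ℝ≥0, (κ ω) {(s : ℝ≥0∞)} = 0 :=
        atom_zero_of_atomTime_top hω
      have h1 : (κ ω) {tailTime (κ ω)} = 0 := by
        have hrw : tailTime (κ ω) = (((tailTime (κ ω)).toNNReal : ℝ≥0) : ℝ≥0∞) :=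
          (ENNReal.coe_toNNReal hne).symm
        rw [hrw]
        exact hna _
      have h2 : (κ ω) (Set.Ioi (tailTime (κ ω))) = 0 := Ioi_tailTime_zero hne
      have hsub : Set.Ici (tailTime (κ ω)) ⊆ {tailTime (κ ω)} ∪ Set.Ioi (tailTime (κ ω)) := by
        intro x hx
        rcases eq_or_lt_of_le (show tailTime (κ ω) ≤ x from hx) with heq | hlt
        · exact Or.inl heq.symm
        · exact Or.inr hlt
      exact measure_mono_null hsub (measure_union_null h1 h2)
    rw [hκ_def] at hzero
    have h := tail_null (mβ := (⨆ s : ℝ≥0, F s)) P (measurable_id'' hmsup) hτmeas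
      (measurable_tailTime (mβ := (⨆ s : ℝ≥0, F s)) κ) (by rw [hκ_def]; exact hzero)
    exact h
  -- the good event
  set E : Set Ω := (⋂ n : ℕ, {ω | atomTime ((invSeq n : ℝ≥0) : ℝ) (κ ω) = ∞}) ∩
      {ω | τ ω < tailTime (κ ω) ∨ tailTime (κ ω) = ∞} with hE_def
  have hEc : P Eᶜ = 0 := by
    rw [hE_def, Set.compl_inter]
    refine measure_union_null ?_ ?_
    · refine measure_mono_null ?_ hE1
      intro ω hω
      simp only [Set.mem_compl_iff, Set.mem_iInter, Set.mem_setOf_eq, not_forall] at hω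
      obtain ⟨n, hn⟩ := hω
      exact Set.mem_iUnion.mpr ⟨n, hn⟩
    · refine measure_mono_null ?_ hE2null
      intro ω hω
      simp only [Set.mem_compl_iff, Set.mem_setOf_eq, not_or, not_lt] at hω
      exact ⟨hω.1, hω.2⟩
  have hEae : ∀ᵐ ω ∂P, ω ∈ E := by
    rw [ae_iff]
    exact measure_mono_null (fun ω hω => hω) hEc
  have hEatoms : ∀ ω ∈ E, ∀ s : ℝ≥0, (κ ω) {(s : ℝ≥0∞)} = 0 := by
    intro ω hω s
    exact atom_zero_of_atomTime_top (fun n => Set.mem_iInter.mp hω.1 n) s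
  -- the process
  set A : ℝ≥0 → Ω → ℝ := fun t ω =>
    if ω ∈ E then ((κ ω) (Set.Ioi (t : ℝ≥0∞))).toReal else (1 + (t : ℝ))⁻¹ with hA_def
  refine ⟨A, ?_, ?_, ?_, ?_, ?_⟩
  · -- (i) version of the Azéma supermartingale
    intro t
    have h1 : A t =ᵐ[P] fun ω => ((κ ω) (Set.Ioi (t : ℝ≥0∞))).toReal := by
      filter_upwards [hEae] with ω hω
      simp only [hA_def]
      rw [if_pos hω]
    exact h1.trans (hGt t)
  · -- (ii) continuity
    intro ω
    by_cases hω : ω ∈ E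
    · have heq : (fun s : ℝ≥0 => A s ω) = fun s : ℝ≥0 => ((κ ω) (Set.Ioi (s : ℝ≥0∞))).toReal :=
        funext fun s => by simp only [hA_def]; rw [if_pos hω]
      rw [heq]
      haveI := hProb ω
      exact continuous_survival (κ ω) (hEatoms ω hω)
    · have heq : (fun s : ℝ≥0 => A s ω) = fun s : ℝ≥0 => (1 + (s : ℝ))⁻¹ :=
        funext fun s => by simp only [hA_def]; rw [if_neg hω]
      rw [heq]
      refine Continuous.inv₀ (continuous_const.add NNReal.continuous_coe) ?_
      intro x
      positivity
  · -- (iii) antitone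
    intro ω
    by_cases hω : ω ∈ E
    · have heq : (fun s : ℝ≥0 => A s ω) = fun s : ℝ≥0 => ((κ ω) (Set.Ioi (s : ℝ≥0∞))).toReal :=
        funext fun s => by simp only [hA_def]; rw [if_pos hω]
      rw [heq]
      haveI := hProb ω
      exact antitone_survival (κ ω)
    · have heq : (fun s : ℝ≥0 => A s ω) = fun s : ℝ≥0 => (1 + (s : ℝ))⁻¹ :=
        funext fun s => by simp only [hA_def]; rw [if_neg hω]
      rw [heq]
      intro a b hab
      have h1 : (0:ℝ) < 1 + (a : ℝ) := by positivity
      exact inv_anti₀ h1 (by exact_mod_cast add_le_add_right (by exact_mod_cast hab) 1)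
  · -- (iv) A 0 = 1
    intro ω
    by_cases hω : ω ∈ E
    · have heq : A 0 ω = ((κ ω) (Set.Ioi ((0 : ℝ≥0) : ℝ≥0∞))).toReal := by
        simp only [hA_def]; rw [if_pos hω]
      rw [heq]
      haveI := hProb ω
      have h0 : (κ ω) {(0 : ℝ≥0∞)} = 0 := by
        have := hEatoms ω hω 0
        simpa using this
      have hIoi : Set.Ioi ((0 : ℝ≥0) : ℝ≥0∞) = ({(0 : ℝ≥0∞)} : Set ℝ≥0∞)ᶜ := by
        ext x
        simp [pos_iff_ne_zero]
      rw [hIoi, measure_compl (measurableSet_singleton 0) (measure_ne_top _ _), h0,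
        measure_univ]
      simp
    · have heq : A 0 ω = (1 + ((0 : ℝ≥0) : ℝ))⁻¹ := by
        simp only [hA_def]; rw [if_neg hω]
      rw [heq]
      norm_num
  · -- (v) positivity on [0, τ]
    filter_upwards [hEae] with ω hω
    intro t ht
    have heq : A t ω = ((κ ω) (Set.Ioi (t : ℝ≥0∞))).toReal := by
      simp only [hA_def]; rw [if_pos hω]
    rw [heq]
    haveI := hProb ω
    refine ENNReal.toReal_pos ?_ (measure_ne_top _ _)
    have hlt : (t : ℝ≥0∞) < tailTime (κ ω) := by
      rcases hω.2 with h | h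
      · exact lt_of_le_of_lt ht h
      · rw [h]; exact ENNReal.coe_lt_top
    exact Ioi_ne_zero_of_lt_tailTime hlt

end Main
end

section
/- Assume hypotheses (A) and (H), and let A be a version of the Azéma supermartingale of τ with continuous nonincreasing paths, A_0 = 1, and such that a.s. A_t > 0 for all t ≤ τ. Then for every t ≥ 0 the random variable −log(A_{t∧τ}) is integrable and E[−log(A_{t∧τ})] = P[τ ≤ t]. -/
open MeasureTheory Set Filter
open scoped ENNReal NNReal

variable {Ω : Type*}

lemma measurable_A_aux {mΩ : MeasurableSpace Ω} (P : Measure Ω)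
    (F : Filtration ℝ≥0 mΩ)
    (hFcomplete : ∀ (t : ℝ≥0) (s : Set Ω), P s = 0 → MeasurableSet[F t] s)
    (A : ℝ≥0 → Ω → ℝ) (τ : Ω → ℝ≥0∞)
    (hAver : ∀ t : ℝ≥0,
      A t =ᵐ[P] P[Set.indicator {ω | (t : ℝ≥0∞) < τ ω} (fun _ => (1 : ℝ)) | F t])
    (s : ℝ≥0) : Measurable[F s] (A s) := by
  set g := P[Set.indicator {ω | (s : ℝ≥0∞) < τ ω} (fun _ => (1 : ℝ)) | F s] with hg
  have hgm : Measurable[F s] g := stronglyMeasurable_condExp.measurable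
  have hN : P {ω | A s ω ≠ g ω} = 0 := by
    have := hAver s
    rw [Filter.EventuallyEq, ae_iff] at this
    exact this
  intro B hB
  have h1 : A s ⁻¹' B = (g ⁻¹' B ∩ {ω | A s ω ≠ g ω}ᶜ) ∪ (A s ⁻¹' B ∩ {ω | A s ω ≠ g ω}) := by
    ext ω; by_cases h : A s ω = g ω <;> simp [Set.mem_preimage, h]
  rw [h1]
  refine MeasurableSet.union (MeasurableSet.inter (hgm hB) ?_) ?_
  · exact (hFcomplete s _ hN).compl
  · exact hFcomplete s _ (measure_mono_null Set.inter_subset_right hN)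
lemma proj_aux {mΩ : MeasurableSpace Ω} (P : Measure Ω) [IsProbabilityMeasure P]
    (F : Filtration ℝ≥0 mΩ) (τ : Ω → ℝ≥0∞) (hτmeas : Measurable τ)
    (hypH : HypothesisH P F τ) (A : ℝ≥0 → Ω → ℝ)
    (hAver : ∀ t : ℝ≥0,
      A t =ᵐ[P] P[Set.indicator {ω | (t : ℝ≥0∞) < τ ω} (fun _ => (1 : ℝ)) | F t])
    (s : ℝ≥0) (G : Set Ω) (hG : MeasurableSet[⨆ r : ℝ≥0, F r] G) :
    (P (G ∩ {ω | (s : ℝ≥0∞) < τ ω})).toReal = ∫ ω in G, A s ω ∂P := by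
  set B : Set Ω := {ω | (s : ℝ≥0∞) < τ ω} with hBdef
  have hmsup : (⨆ r : ℝ≥0, F r) ≤ mΩ := iSup_le fun r => F.le r
  have hGm : MeasurableSet G := hmsup _ hG
  have hBm : MeasurableSet B := hτmeas measurableSet_Ioi
  -- B is measurable in the enlarged filtration at time s
  have hBenl : MeasurableSet[enlTilde F τ s] B := by
    have h1 : defaultProcess τ s ⁻¹' {1} = {ω | τ ω ≤ (s : ℝ≥0∞)} := by
      ext ω
      by_cases h : τ ω ≤ (s : ℝ≥0∞) <;>
        simp [defaultProcess, Set.indicator_apply, h]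
    have h2 : MeasurableSet[MeasurableSpace.comap (defaultProcess τ s)
        (inferInstance : MeasurableSpace ℝ)] {ω | τ ω ≤ (s : ℝ≥0∞)} :=
      ⟨{1}, measurableSet_singleton 1, h1⟩
    have h3 : MeasurableSpace.comap (defaultProcess τ s)
        (inferInstance : MeasurableSpace ℝ) ≤ natFiltDefault τ s := by
      refine le_iSup₂ (f := fun s' (_ : s' ∈ Set.Iic s) =>
        MeasurableSpace.comap (defaultProcess τ s') (inferInstance : MeasurableSpace ℝ)) s
        (Set.mem_Iic.2 le_rfl)
    have h4 : MeasurableSet[natFiltDefault τ s] {ω | τ ω ≤ (s : ℝ≥0∞)} := h3 _ h2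
    have h5 : MeasurableSet[natFiltDefault τ s] B := by
      have : B = {ω | τ ω ≤ (s : ℝ≥0∞)}ᶜ := by
        ext ω
        simp only [hBdef, Set.mem_setOf_eq, Set.mem_compl_iff, not_le]
      rw [this]; exact h4.compl
    exact (le_sup_right : natFiltDefault τ s ≤ enlTilde F τ s) _ h5
  have hprod := hypH s G B hG hBenl
  have hintGB : Integrable ((G ∩ B).indicator (fun _ => (1 : ℝ))) P :=
    (integrable_const (1 : ℝ)).indicator (hGm.inter hBm)
  have hintG : Integrable (G.indicator (fun _ => (1 : ℝ))) P :=
    (integrable_const (1 : ℝ)).indicator hGm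
  set f : Ω → ℝ := P[B.indicator (fun _ => (1 : ℝ)) | F s] with hf
  have hfsm : StronglyMeasurable[F s] f := stronglyMeasurable_condExp
  have hfint : Integrable f P := integrable_condExp
  -- f * 1_G = G.indicator f
  have hmul : (f * G.indicator (fun _ => (1 : ℝ))) = G.indicator f := by
    ext ω; by_cases h : ω ∈ G <;> simp [Set.indicator_apply, h]
  have hfgint : Integrable (f * G.indicator (fun _ => (1 : ℝ))) P := by
    rw [hmul]; exact hfint.indicator hGm
  have hpull := condExp_mul_of_stronglyMeasurable_left (m := F s) (μ := P) hfsm hfgint hintG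
  calc (P (G ∩ B)).toReal
      = ∫ ω, (G ∩ B).indicator (fun _ => (1 : ℝ)) ω ∂P := by
        rw [integral_indicator (hGm.inter hBm), setIntegral_const, smul_eq_mul, mul_one]; rfl
    _ = ∫ ω, (P[(G ∩ B).indicator (fun _ => (1 : ℝ)) | F s]) ω ∂P :=
        (integral_condExp (F.le s)).symm
    _ = ∫ ω, (P[G.indicator (fun _ => (1 : ℝ)) | F s]) ω * f ω ∂P :=
        integral_congr_ae hprod
    _ = ∫ ω, (f * P[G.indicator (fun _ => (1 : ℝ)) | F s]) ω ∂P := by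
        congr 1; ext ω; exact mul_comm _ _
    _ = ∫ ω, (P[f * G.indicator (fun _ => (1 : ℝ)) | F s]) ω ∂P :=
        (integral_congr_ae hpull).symm
    _ = ∫ ω, (f * G.indicator (fun _ => (1 : ℝ))) ω ∂P := integral_condExp (F.le s)
    _ = ∫ ω, G.indicator f ω ∂P := by rw [hmul]
    _ = ∫ ω in G, f ω ∂P := integral_indicator hGm
    _ = ∫ ω in G, A s ω ∂P := by
        refine setIntegral_congr_ae hGm ?_
        filter_upwards [hAver s] with ω hω _
        exact hω.symm

noncomputable def sigC (A : ℝ≥0 → Ω → ℝ) (c : ℝ) (ω : Ω) : ℝ≥0∞ :=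
  ⨅ (s : ℝ≥0) (_ : A s ω ≤ c), (s : ℝ≥0∞)

lemma sigC_le_iff (A : ℝ≥0 → Ω → ℝ) (c : ℝ)
    (hAcont : ∀ ω, Continuous fun s : ℝ≥0 => A s ω)
    (hAmono : ∀ ω, Antitone fun s : ℝ≥0 => A s ω)
    (ω : Ω) (s : ℝ≥0) : sigC A c ω ≤ (s : ℝ≥0∞) ↔ A s ω ≤ c := by
  constructor
  · intro h
    -- For every n, A (s + (1/(n+1))) ω ≤ c
    have key : ∀ n : ℕ, A (s + (n+1 : ℝ≥0)⁻¹) ω ≤ c := by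
      intro n
      have hlt : sigC A c ω < ((s + (n+1 : ℝ≥0)⁻¹ : ℝ≥0) : ℝ≥0∞) := by
        refine lt_of_le_of_lt h ?_
        rw [ENNReal.coe_lt_coe]
        exact lt_add_of_pos_right _ (by positivity)
      rw [sigC, iInf_lt_iff] at hlt
      obtain ⟨s', hs'⟩ := hlt
      rw [iInf_lt_iff] at hs'
      obtain ⟨hs'c, hs'lt⟩ := hs'
      rw [ENNReal.coe_lt_coe] at hs'lt
      exact le_trans (hAmono ω hs'lt.le) hs'c
    have hts : Filter.Tendsto (fun n : ℕ => s + ((n:ℝ≥0)+1)⁻¹) Filter.atTop (nhds s) := by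
      have h1 : Filter.Tendsto (fun n : ℕ => ((n:ℝ≥0)+1)⁻¹) Filter.atTop (nhds 0) := by
        rw [← NNReal.tendsto_coe]
        have := tendsto_one_div_add_atTop_nhds_zero_nat (𝕜 := ℝ)
        simpa [NNReal.coe_inv, one_div] using this
      simpa using tendsto_const_nhds.add h1
    have := ((hAcont ω).tendsto s).comp hts
    refine le_of_tendsto this ?_
    filter_upwards with n
    exact key n
  · intro h
    exact iInf₂_le s h
-- grid
noncomputable def sfun (t : ℝ≥0) (n k : ℕ) : ℝ≥0 := t * (k : ℝ≥0) / 2 ^ n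

lemma sfun_zero (t : ℝ≥0) (n : ℕ) : sfun t n 0 = 0 := by simp [sfun]

lemma sfun_mono (t : ℝ≥0) (n : ℕ) : Monotone (sfun t n) := by
  intro k k' hkk'
  unfold sfun
  gcongr


lemma sfun_top (t : ℝ≥0) (n : ℕ) : sfun t n (2 ^ n) = t := by
  unfold sfun
  rw [Nat.cast_pow, Nat.cast_ofNat]
  exact mul_div_cancel_right₀ t (pow_ne_zero n two_ne_zero)

lemma sfun_succ (t : ℝ≥0) (n k : ℕ) : sfun t n (k + 1) = sfun t n k + t / 2 ^ n := by
  unfold sfun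
  rw [Nat.cast_add, Nat.cast_one, mul_add, mul_one, add_div]

lemma per_u {mΩ : MeasurableSpace Ω} (P : Measure Ω) [IsProbabilityMeasure P]
    (F : Filtration ℝ≥0 mΩ)
    (hFcomplete : ∀ (t : ℝ≥0) (s : Set Ω), P s = 0 → MeasurableSet[F t] s)
    (τ : Ω → ℝ≥0∞) (hτmeas : Measurable τ)
    (hypA : HypothesisA P F τ) (hypH : HypothesisH P F τ)
    (A : ℝ≥0 → Ω → ℝ)
    (hAver : ∀ t : ℝ≥0,
      A t =ᵐ[P] P[Set.indicator {ω | (t : ℝ≥0∞) < τ ω} (fun _ => (1 : ℝ)) | F t])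
    (hAcont : ∀ ω, Continuous fun s : ℝ≥0 => A s ω)
    (hAmono : ∀ ω, Antitone fun s : ℝ≥0 => A s ω)
    (hA0 : ∀ ω, A 0 ω = 1)
    (t : ℝ≥0) (c : ℝ) (hc0 : 0 < c) (hc1 : c < 1) :
    P {ω | A t ω ≤ c ∧ sigC A c ω ≤ τ ω} =
      ENNReal.ofReal c * P {ω | A t ω ≤ c} := by
  classical
  have hσle : ∀ (ω : Ω) (s : ℝ≥0), sigC A c ω ≤ (s : ℝ≥0∞) ↔ A s ω ≤ c :=
    fun ω s => sigC_le_iff A c hAcont hAmono ω s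
  have hmA : ∀ s : ℝ≥0, Measurable[F s] (A s) := measurable_A_aux P F hFcomplete A τ hAver
  have hmA' : ∀ s : ℝ≥0, Measurable (A s) := fun s => (hmA s).mono (F.le s) le_rfl
  have hlev : ∀ s : ℝ≥0, MeasurableSet[F s] {ω | A s ω ≤ c} := fun s =>
    hmA s measurableSet_Iic
  have hlevsup : ∀ s : ℝ≥0, MeasurableSet[⨆ r : ℝ≥0, F r] {ω | A s ω ≤ c} := fun s =>
    (le_iSup (fun r : ℝ≥0 => (F r : MeasurableSpace Ω)) s) _ (hlev s)
  have hlevm : ∀ s : ℝ≥0, MeasurableSet {ω | A s ω ≤ c} := fun s =>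
    (hmA' s) measurableSet_Iic
  have hA1 : ∀ (ω : Ω) (s : ℝ≥0), A s ω ≤ 1 := fun ω s => by
    have := hAmono ω (zero_le : (0:ℝ≥0) ≤ s)
    simpa [hA0 ω] using this
  by_cases ht : t = 0
  · subst ht
    have hE : {ω | A 0 ω ≤ c ∧ sigC A c ω ≤ τ ω} = (∅ : Set Ω) := by
      ext ω
      simp only [Set.mem_setOf_eq, Set.mem_empty_iff_false, iff_false, not_and]
      intro h
      exact absurd h (by rw [hA0 ω]; exact not_le.mpr hc1)
    have hE2 : {ω | A (0:ℝ≥0) ω ≤ c} = (∅ : Set Ω) := by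
      ext ω
      simp only [Set.mem_setOf_eq, Set.mem_empty_iff_false, iff_false]
      rw [hA0 ω]; exact not_le.mpr hc1
    rw [hE, hE2]; simp
  have htpos : 0 < t := pos_iff_ne_zero.mpr ht
  set σ := sigC A c with hσdef
  have hnull : P {ω | τ ω = σ ω ∧ σ ω ≠ ∞} = 0 := by
    refine hypA σ (fun s => ?_)
    have hset : {ω | σ ω ≤ (s : ℝ≥0∞)} = {ω | A s ω ≤ c} := by
      ext ω; exact hσle ω s
    rw [hset]; exact hlev s
  have hstep1 : P {ω | A t ω ≤ c ∧ σ ω ≤ τ ω} = P {ω | A t ω ≤ c ∧ σ ω < τ ω} := by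
    refine le_antisymm ?_ (measure_mono fun ω hω => ⟨hω.1, hω.2.le⟩)
    have hsub : {ω | A t ω ≤ c ∧ σ ω ≤ τ ω} ⊆
        {ω | A t ω ≤ c ∧ σ ω < τ ω} ∪ {ω | τ ω = σ ω ∧ σ ω ≠ ∞} := by
      intro ω hω
      rcases lt_or_eq_of_le hω.2 with h | h
      · exact Or.inl ⟨hω.1, h⟩
      · refine Or.inr ⟨h.symm, ?_⟩
        have hle : σ ω ≤ ((t : ℝ≥0) : ℝ≥0∞) := (hσle ω t).mpr hω.1
        exact ne_top_of_le_ne_top ENNReal.coe_ne_top hle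
    calc P {ω | A t ω ≤ c ∧ σ ω ≤ τ ω}
        ≤ P ({ω | A t ω ≤ c ∧ σ ω < τ ω} ∪ {ω | τ ω = σ ω ∧ σ ω ≠ ∞}) := measure_mono hsub
      _ ≤ P {ω | A t ω ≤ c ∧ σ ω < τ ω} + P {ω | τ ω = σ ω ∧ σ ω ≠ ∞} := measure_union_le _ _
      _ = P {ω | A t ω ≤ c ∧ σ ω < τ ω} := by rw [hnull, add_zero]
  -- grid sets
  set Gk : ℕ → ℕ → Set Ω :=
    fun n k => {ω | A (sfun t n (k+1)) ω ≤ c} ∩ {ω | A (sfun t n k) ω ≤ c}ᶜ with hGdef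
  have hGm : ∀ n k, MeasurableSet (Gk n k) := fun n k => (hlevm _).inter (hlevm _).compl
  have hGsup : ∀ n k, MeasurableSet[⨆ r : ℝ≥0, F r] (Gk n k) := fun n k =>
    MeasurableSet.inter (hlevsup _) (MeasurableSet.compl (hlevsup _))
  have hGsubE : ∀ n k, k < 2^n → Gk n k ⊆ {ω | A t ω ≤ c} := by
    intro n k hk ω hω
    have h1 : sfun t n (k+1) ≤ t := by
      conv_rhs => rw [← sfun_top t n]
      exact sfun_mono t n (by omega)
    exact le_trans (hAmono ω h1) hω.1
  have hdisj : ∀ n k k', k < k' → Disjoint (Gk n k) (Gk n k') := by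
    intro n k k' hkk'
    rw [Set.disjoint_left]
    intro ω h1 h2
    have hle : sfun t n (k+1) ≤ sfun t n k' := sfun_mono t n (by omega)
    exact h2.2 (le_trans (hAmono ω hle) h1.1)
  have hmem : ∀ n ω, A t ω ≤ c → ∃ k, k < 2^n ∧ ω ∈ Gk n k := by
    intro n ω hω
    have hex : ∃ k, A (sfun t n k) ω ≤ c := ⟨2^n, by rw [sfun_top]; exact hω⟩
    have hk'le : Nat.find hex ≤ 2^n := Nat.find_le (by rw [sfun_top]; exact hω)
    have hk'pos : 0 < Nat.find hex := by
      by_contra h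
      have h0 : Nat.find hex = 0 := by omega
      have := Nat.find_spec hex
      rw [h0, sfun_zero, hA0 ω] at this
      linarith
    refine ⟨Nat.find hex - 1, by omega, ?_, ?_⟩
    · have heq : Nat.find hex - 1 + 1 = Nat.find hex := by omega
      rw [heq]; exact Nat.find_spec hex
    · exact Nat.find_min hex (by omega)
  have hAint : ∀ s : ℝ≥0, Integrable (A s) P := fun s =>
    integrable_condExp.congr (hAver s).symm
  set E := {ω | A t ω ≤ c} with hEdef
  have hfin : ∀ S : Set Ω, P S ≠ ∞ := fun S => measure_ne_top P S
  set r : ℝ := (P {ω | A t ω ≤ c ∧ σ ω < τ ω}).toReal with hrdef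
  set p : ℝ := (P E).toReal with hpdef
  have hpd : ∀ n, Set.PairwiseDisjoint (↑(Finset.range (2^n)) : Set ℕ) (Gk n) := by
    intro n k _ k' _ hne
    rcases hne.lt_or_gt with h | h
    · exact hdisj n k k' h
    · exact (hdisj n k' k h).symm
  have hEunion : ∀ n, E = ⋃ k ∈ Finset.range (2^n), Gk n k := by
    intro n; ext ω
    simp only [Set.mem_iUnion, Finset.mem_range, exists_prop]
    constructor
    · intro hω
      obtain ⟨k, hk, hmemk⟩ := hmem n ω hω
      exact ⟨k, hk, hmemk⟩
    · rintro ⟨k, hk, hmemk⟩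
      exact hGsubE n k hk hmemk
  have hPE : ∀ n, P E = ∑ k ∈ Finset.range (2^n), P (Gk n k) := by
    intro n
    rw [hEunion n]
    exact measure_biUnion_finset (hpd n) (fun k _ => hGm n k)
  have hproj : ∀ (s : ℝ≥0) (G : Set Ω), MeasurableSet[⨆ r : ℝ≥0, F r] G →
      (P (G ∩ {ω | (s : ℝ≥0∞) < τ ω})).toReal = ∫ ω in G, A s ω ∂P :=
    proj_aux P F τ hτmeas hypH A hAver
  set U : ℕ → ℝ := fun n => ∑ k ∈ Finset.range (2^n), ∫ ω in Gk n k, A (sfun t n k) ω ∂P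
    with hUdef
  set L : ℕ → ℝ := fun n => ∑ k ∈ Finset.range (2^n), ∫ ω in Gk n k, A (sfun t n (k+1)) ω ∂P
    with hLdef
  have hrU : ∀ n, r ≤ U n := by
    intro n
    have hsub : {ω | A t ω ≤ c ∧ σ ω < τ ω} ⊆
        ⋃ k ∈ Finset.range (2^n), (Gk n k ∩ {ω | (↑(sfun t n k) : ℝ≥0∞) < τ ω}) := by
      intro ω hω
      obtain ⟨k, hk, hmemk⟩ := hmem n ω hω.1
      have hσgt : (↑(sfun t n k) : ℝ≥0∞) < σ ω := by
        by_contra h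
        exact hmemk.2 ((hσle ω _).mp (not_lt.mp h))
      simp only [Set.mem_iUnion, Finset.mem_range, exists_prop]
      exact ⟨k, hk, hmemk, lt_trans hσgt hω.2⟩
    have h1 : P {ω | A t ω ≤ c ∧ σ ω < τ ω} ≤
        ∑ k ∈ Finset.range (2^n), P (Gk n k ∩ {ω | (↑(sfun t n k) : ℝ≥0∞) < τ ω}) :=
      le_trans (measure_mono hsub) (measure_biUnion_finset_le _ _)
    have h2 : r ≤ ∑ k ∈ Finset.range (2^n),
        (P (Gk n k ∩ {ω | (↑(sfun t n k) : ℝ≥0∞) < τ ω})).toReal := by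
      rw [hrdef]
      calc (P {ω | A t ω ≤ c ∧ σ ω < τ ω}).toReal
          ≤ (∑ k ∈ Finset.range (2^n),
              P (Gk n k ∩ {ω | (↑(sfun t n k) : ℝ≥0∞) < τ ω})).toReal :=
            ENNReal.toReal_mono (ENNReal.sum_lt_top.mpr fun _ _ => (hfin _).lt_top).ne h1
        _ = _ := ENNReal.toReal_sum (fun _ _ => hfin _)
    refine le_trans h2 (le_of_eq ?_)
    exact Finset.sum_congr rfl fun k hk => hproj (sfun t n k) (Gk n k) (hGsup n k)
  have hLr : ∀ n, L n ≤ r := by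
    intro n
    have hsub : ∀ k ∈ Finset.range (2^n),
        Gk n k ∩ {ω | (↑(sfun t n (k+1)) : ℝ≥0∞) < τ ω} ⊆ {ω | A t ω ≤ c ∧ σ ω < τ ω} := by
      intro k hk ω hω
      refine ⟨hGsubE n k (Finset.mem_range.mp hk) hω.1, ?_⟩
      exact lt_of_le_of_lt ((hσle ω _).mpr hω.1.1) hω.2
    have hd2 : Set.PairwiseDisjoint (↑(Finset.range (2^n)) : Set ℕ)
        (fun k => Gk n k ∩ {ω | (↑(sfun t n (k+1)) : ℝ≥0∞) < τ ω}) :=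
      fun k hk k' hk' hne =>
        ((hpd n hk hk' hne).mono Set.inter_subset_left Set.inter_subset_left)
    have hmeas2 : ∀ k ∈ Finset.range (2^n),
        MeasurableSet (Gk n k ∩ {ω | (↑(sfun t n (k+1)) : ℝ≥0∞) < τ ω}) :=
      fun k _ => (hGm n k).inter (hτmeas measurableSet_Ioi)
    have h1 : ∑ k ∈ Finset.range (2^n),
        P (Gk n k ∩ {ω | (↑(sfun t n (k+1)) : ℝ≥0∞) < τ ω})
        ≤ P {ω | A t ω ≤ c ∧ σ ω < τ ω} := by
      rw [← measure_biUnion_finset hd2 hmeas2]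
      exact measure_mono (Set.iUnion₂_subset hsub)
    have h2 := ENNReal.toReal_mono (hfin _) h1
    rw [ENNReal.toReal_sum (fun _ _ => hfin _)] at h2
    refine le_trans (le_of_eq ?_) h2
    exact (Finset.sum_congr rfl fun k hk =>
      (hproj (sfun t n (k+1)) (Gk n k) (hGsup n k))).symm
  have hcp : ∀ n, c * p = ∑ k ∈ Finset.range (2^n), (P (Gk n k)).toReal * c := by
    intro n
    rw [hpdef, hPE n, ENNReal.toReal_sum (fun _ _ => hfin _), Finset.mul_sum]
    exact Finset.sum_congr rfl fun k _ => mul_comm _ _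
  have hLcp : ∀ n, L n ≤ c * p := by
    intro n
    rw [hcp n]
    simp only [hLdef]
    refine Finset.sum_le_sum fun k hk => ?_
    have h1 : ∫ ω in Gk n k, A (sfun t n (k+1)) ω ∂P ≤ ∫ ω in Gk n k, c ∂P := by
      refine setIntegral_mono_on ((hAint _).integrableOn)
        ((integrable_const c).integrableOn) (hGm n k) ?_
      intro ω hω; exact hω.1
    calc ∫ ω in Gk n k, A (sfun t n (k+1)) ω ∂P ≤ ∫ ω in Gk n k, c ∂P := h1
      _ = (P (Gk n k)).toReal * c := by rw [setIntegral_const, smul_eq_mul]; rfl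
  have hcpU : ∀ n, c * p ≤ U n := by
    intro n
    rw [hcp n]
    simp only [hUdef]
    refine Finset.sum_le_sum fun k hk => ?_
    have h1 : ∫ ω in Gk n k, c ∂P ≤ ∫ ω in Gk n k, A (sfun t n k) ω ∂P := by
      refine setIntegral_mono_on ((integrable_const c).integrableOn)
        ((hAint _).integrableOn) (hGm n k) ?_
      intro ω hω
      exact (not_le.mp (show ¬ A (sfun t n k) ω ≤ c from hω.2)).le
    calc (P (Gk n k)).toReal * c = ∫ ω in Gk n k, c ∂P := by
          rw [setIntegral_const, smul_eq_mul]; rfl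
      _ ≤ _ := h1
  -- the oscillation functions
  set f : ℕ → Ω → ℝ := fun n ω => ∑ k ∈ Finset.range (2^n),
      (Gk n k).indicator (fun ω' => A (sfun t n k) ω' - A (sfun t n (k+1)) ω') ω with hfdef
  have hfeq : ∀ n, ∫ ω, f n ω ∂P = U n - L n := by
    intro n
    have hterm : ∀ k : ℕ, Integrable
        ((Gk n k).indicator (fun ω' => A (sfun t n k) ω' - A (sfun t n (k+1)) ω')) P :=
      fun k => (((hAint _).sub (hAint _)).indicator (hGm n k))
    simp only [hfdef]
    rw [integral_finset_sum _ (fun k _ => hterm k)]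
    simp only [hUdef, hLdef]
    rw [← Finset.sum_sub_distrib]
    refine Finset.sum_congr rfl fun k hk => ?_
    rw [integral_indicator (hGm n k)]
    exact integral_sub ((hAint _).integrableOn) ((hAint _).integrableOn)
  have hf0 : ∀ n ω, 0 ≤ f n ω := by
    intro n ω
    refine Finset.sum_nonneg fun k _ => ?_
    refine Set.indicator_nonneg (fun ω' _ => sub_nonneg.mpr ?_) ω
    exact hAmono ω' (sfun_mono t n (Nat.le_succ k))
  have hsingle : ∀ n ω k0, k0 < 2^n → ω ∈ Gk n k0 →
      f n ω = A (sfun t n k0) ω - A (sfun t n (k0+1)) ω := by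
    intro n ω k0 hk0 hω
    simp only [hfdef]
    rw [Finset.sum_eq_single k0]
    · rw [Set.indicator_of_mem hω]
    · intro b _ hb
      refine Set.indicator_of_notMem (fun hmem' => ?_) _
      rcases hb.lt_or_gt with h | h
      · exact (Set.disjoint_left.mp (hdisj n b k0 h)) hmem' hω
      · exact (Set.disjoint_left.mp (hdisj n k0 b h)) hω hmem'
    · intro h
      exact absurd (Finset.mem_range.mpr hk0) h
  have hfbd : ∀ n ω, f n ω ≤ 1 - A t ω := by
    intro n ω
    by_cases hc' : A t ω ≤ c
    · obtain ⟨k0, hk0, hω⟩ := hmem n ω hc'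
      rw [hsingle n ω k0 hk0 hω]
      have h1 : A (sfun t n k0) ω ≤ 1 := hA1 ω _
      have h2 : A t ω ≤ A (sfun t n (k0+1)) ω := by
        refine hAmono ω ?_
        exact le_trans (sfun_mono t n (by omega : k0 + 1 ≤ 2^n)) (le_of_eq (sfun_top t n))
      linarith
    · have hz : f n ω = 0 := by
        rw [hfdef]
        refine Finset.sum_eq_zero fun k hk => ?_
        refine Set.indicator_of_notMem (fun hmem' => ?_) _
        exact hc' (hGsubE n k (Finset.mem_range.mp hk) hmem')
      rw [hz]
      have := hA1 ω t
      linarith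
  have hδ0 : Tendsto (fun n : ℕ => t / 2 ^ n) atTop (nhds (0 : ℝ≥0)) := by
    rw [← NNReal.tendsto_coe]
    have h1 : Tendsto (fun n : ℕ => (t : ℝ) * (1/2) ^ n) atTop (nhds ((t : ℝ) * 0)) :=
      (tendsto_pow_atTop_nhds_zero_of_lt_one (by norm_num) (by norm_num)).const_mul _
    rw [mul_zero] at h1
    refine h1.congr fun n => ?_
    rw [NNReal.coe_div, NNReal.coe_pow]
    simp [div_eq_mul_inv]
  have hftend : ∀ ω, Tendsto (fun n => f n ω) atTop (nhds 0) := by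
    intro ω
    by_cases hω : A t ω ≤ c
    · set σ' := (σ ω).toNNReal with hσ'def
      have hσfin : σ ω ≠ ∞ :=
        ne_top_of_le_ne_top ENNReal.coe_ne_top ((hσle ω t).mpr hω)
      have hσco : ((σ' : ℝ≥0) : ℝ≥0∞) = σ ω := ENNReal.coe_toNNReal hσfin
      have key : ∀ n, f n ω ≤ A (σ' - t / 2^n) ω - A (σ' + t / 2^n) ω := by
        intro n
        obtain ⟨k0, hk0, hωk⟩ := hmem n ω hω
        have h1 : sfun t n k0 < σ' := by
          have hlt : (↑(sfun t n k0) : ℝ≥0∞) < σ ω := by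
            by_contra h
            exact hωk.2 ((hσle ω _).mp (not_lt.mp h))
          rw [← hσco] at hlt
          exact_mod_cast hlt
        have h2 : σ' ≤ sfun t n (k0+1) := by
          have hle2 : σ ω ≤ (↑(sfun t n (k0+1)) : ℝ≥0∞) := (hσle ω _).mpr hωk.1
          rw [← hσco] at hle2
          exact_mod_cast hle2
        have hup : sfun t n (k0+1) ≤ σ' + t / 2^n := by
          rw [sfun_succ]
          exact add_le_add h1.le le_rfl
        have hdown : σ' - t / 2^n ≤ sfun t n k0 := by
          rw [tsub_le_iff_right, ← sfun_succ]
          exact h2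
        rw [hsingle n ω k0 hk0 hωk]
        exact sub_le_sub (hAmono ω hdown) (hAmono ω hup)
      have hcsub : Continuous (fun x : ℝ≥0 => σ' - x) := continuous_const.sub continuous_id
      have hcadd : Continuous (fun x : ℝ≥0 => σ' + x) := continuous_const.add continuous_id
      have h1 : Tendsto (fun n : ℕ => σ' - t / 2^n) atTop (nhds σ') := by
        have := (hcsub.tendsto 0).comp hδ0
        simpa [Function.comp_def] using this
      have h2 : Tendsto (fun n : ℕ => σ' + t / 2^n) atTop (nhds σ') := by
        have := (hcadd.tendsto 0).comp hδ0
        simpa [Function.comp_def] using this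
      have hg : Tendsto (fun n : ℕ => A (σ' - t / 2^n) ω - A (σ' + t / 2^n) ω)
          atTop (nhds 0) := by
        have hh := Filter.Tendsto.sub (((hAcont ω).tendsto σ').comp h1)
          (((hAcont ω).tendsto σ').comp h2)
        simpa using hh
      exact squeeze_zero (fun n => hf0 n ω) key hg
    · have hz : (fun n => f n ω) = fun _ => 0 := by
        funext n
        simp only [hfdef]
        refine Finset.sum_eq_zero fun k hk => ?_
        refine Set.indicator_of_notMem (fun hmem' => ?_) _
        exact hω (hGsubE n k (Finset.mem_range.mp hk) hmem')
      rw [hz]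
      exact tendsto_const_nhds
  have hint0 : Tendsto (fun n => ∫ ω, f n ω ∂P) atTop (nhds 0) := by
    have hmf : ∀ n, AEStronglyMeasurable (f n) P := by
      intro n
      refine Measurable.aestronglyMeasurable ?_
      refine Finset.measurable_sum _ fun k _ => ?_
      exact ((hmA' _).sub (hmA' _)).indicator (hGm n k)
    have hbint : Integrable (fun ω => 1 - A t ω) P := (integrable_const 1).sub (hAint t)
    have hbd : ∀ n, ∀ᵐ ω ∂P, ‖f n ω‖ ≤ 1 - A t ω := by
      intro n
      refine ae_of_all _ fun ω => ?_
      rw [Real.norm_eq_abs, abs_of_nonneg (hf0 n ω)]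
      exact hfbd n ω
    have := tendsto_integral_of_dominated_convergence (fun ω => 1 - A t ω)
      hmf hbint hbd (ae_of_all _ hftend)
    simpa using this
  have hUL : ∀ n, |r - c * p| ≤ U n - L n := by
    intro n
    rw [abs_sub_le_iff]
    constructor
    · linarith [hrU n, hLcp n]
    · linarith [hLr n, hcpU n]
  have hULtend : Tendsto (fun n => U n - L n) atTop (nhds 0) := by
    refine hint0.congr fun n => ?_
    exact hfeq n
  have habs : |r - c * p| ≤ 0 :=
    ge_of_tendsto hULtend (Filter.Eventually.of_forall hUL)
  have hrcp : r = c * p := by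
    have h0 : |r - c * p| = 0 := le_antisymm habs (abs_nonneg _)
    have := abs_eq_zero.mp h0
    linarith [sub_eq_zero.mp this]
  rw [hstep1]
  calc P {ω | A t ω ≤ c ∧ σ ω < τ ω} = ENNReal.ofReal r :=
        (ENNReal.ofReal_toReal (hfin _)).symm
    _ = ENNReal.ofReal (c * p) := by rw [hrcp]
    _ = ENNReal.ofReal c * ENNReal.ofReal p := ENNReal.ofReal_mul hc0.le
    _ = ENNReal.ofReal c * P E := by rw [hpdef, ENNReal.ofReal_toReal (hfin E)]

/-- Under hypotheses (A) and (H), with `A` a continuous nonincreasing version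
of the Azéma supermartingale, `A_0 = 1`, a.s. positive on `[0, τ]`, for every `t ≥ 0` the random
variable `-log A_{t ∧ τ}` is integrable and `E[-log A_{t ∧ τ}] = P[τ ≤ t]`. -/
theorem expectation_neg_log_azema_eq_default_probability
    {mΩ : MeasurableSpace Ω} (P : Measure Ω) [IsProbabilityMeasure P]
    (F : MeasureTheory.Filtration ℝ≥0 mΩ)
    (hFrc : ∀ t : ℝ≥0, F t = ⨅ (ε : ℝ≥0) (_ : 0 < ε), F (t + ε))
    (hFcomplete : ∀ (t : ℝ≥0) (s : Set Ω), P s = 0 → MeasurableSet[F t] s)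
    (τ : Ω → ℝ≥0∞) (hτmeas : Measurable τ) (hτpos : ∀ ω, 0 < τ ω)
    (hypA : HypothesisA P F τ) (hypH : HypothesisH P F τ)
    (A : ℝ≥0 → Ω → ℝ)
    (hAver : ∀ t : ℝ≥0,
      A t =ᵐ[P] P[Set.indicator {ω | (t : ℝ≥0∞) < τ ω} (fun _ => (1 : ℝ)) | F t])
    (hAcont : ∀ ω, Continuous fun s : ℝ≥0 => A s ω)
    (hAmono : ∀ ω, Antitone fun s : ℝ≥0 => A s ω)
    (hA0 : ∀ ω, A 0 ω = 1)
    (hApos : ∀ᵐ ω ∂P, ∀ t : ℝ≥0, (t : ℝ≥0∞) ≤ τ ω → 0 < A t ω)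
    (t : ℝ≥0) :
    Integrable (fun ω => - Real.log (A (min (t : ℝ≥0∞) (τ ω)).toNNReal ω)) P ∧
    ∫ ω, - Real.log (A (min (t : ℝ≥0∞) (τ ω)).toNNReal ω) ∂P =
      (P {ω | τ ω ≤ (t : ℝ≥0∞)}).toReal := by
  classical
  have hmA : ∀ s : ℝ≥0, Measurable[F s] (A s) := measurable_A_aux P F hFcomplete A τ hAver
  have hmA' : ∀ s : ℝ≥0, Measurable (A s) := fun s => (hmA s).mono (F.le s) le_rfl
  have hA1 : ∀ (ω : Ω) (s : ℝ≥0), A s ω ≤ 1 := fun ω s => by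
    have := hAmono ω (zero_le : (0:ℝ≥0) ≤ s)
    simpa [hA0 ω] using this
  -- the evaluated process X
  set X : Ω → ℝ := fun ω => A (min (t : ℝ≥0∞) (τ ω)).toNNReal ω with hXdef
  set m : Ω → ℝ≥0 := fun ω => (min (t : ℝ≥0∞) (τ ω)).toNNReal with hmdef
  have hmmeas : Measurable m := (measurable_const.min hτmeas).ennreal_toNNReal
  have hXuncurry : StronglyMeasurable (Function.uncurry A) :=
    stronglyMeasurable_uncurry_of_continuous_of_stronglyMeasurable hAcont
      (fun s => (hmA' s).stronglyMeasurable)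
  have hXmeas : Measurable X := by
    have : X = (Function.uncurry A) ∘ (fun ω => (m ω, ω)) := rfl
    rw [this]
    exact hXuncurry.measurable.comp (hmmeas.prodMk measurable_id)
  have hcoemin : ∀ ω, ((m ω : ℝ≥0) : ℝ≥0∞) = min (t : ℝ≥0∞) (τ ω) := fun ω =>
    ENNReal.coe_toNNReal (ne_top_of_le_ne_top ENNReal.coe_ne_top (min_le_left _ _))
  have hmleτ : ∀ ω, ((m ω : ℝ≥0) : ℝ≥0∞) ≤ τ ω := fun ω => by
    rw [hcoemin ω]; exact min_le_right _ _
  have hX1 : ∀ ω, X ω ≤ 1 := fun ω => hA1 ω _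
  have hXpos : ∀ᵐ ω ∂P, 0 < X ω := by
    filter_upwards [hApos] with ω hω
    exact hω (m ω) (hmleτ ω)
  -- nonnegativity of -log X
  have hnn : ∀ᵐ ω ∂P, 0 ≤ - Real.log (X ω) := by
    filter_upwards [hXpos] with ω hω
    simpa using Real.log_nonpos hω.le (hX1 ω)
  have hlogmeas : AEStronglyMeasurable (fun ω => - Real.log (X ω)) P :=
    ((Real.measurable_log.comp hXmeas).neg).aestronglyMeasurable
  -- A t is a.e. in [0,1]
  have hAt0 : ∀ᵐ ω ∂P, 0 ≤ A t ω := by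
    have h1 : (0:Ω → ℝ) ≤ᵐ[P] P[Set.indicator {ω | (t : ℝ≥0∞) < τ ω} (fun _ => (1 : ℝ)) | F t] :=
      condExp_nonneg (ae_of_all _ fun ω => Set.indicator_nonneg (fun _ _ => zero_le_one) ω)
    filter_upwards [h1, hAver t] with ω h1ω h2ω
    rw [h2ω]; exact h1ω
  -- integral of A t
  have hAint : ∀ s : ℝ≥0, Integrable (A s) P := fun s =>
    integrable_condExp.congr (hAver s).symm
  have hAtι : ∫ ω, A t ω ∂P = (P {ω | (t : ℝ≥0∞) < τ ω}).toReal := by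
    have hBm : MeasurableSet {ω | (t : ℝ≥0∞) < τ ω} := hτmeas measurableSet_Ioi
    calc ∫ ω, A t ω ∂P
        = ∫ ω, (P[Set.indicator {ω | (t : ℝ≥0∞) < τ ω} (fun _ => (1 : ℝ)) | F t]) ω ∂P :=
          integral_congr_ae (hAver t)
      _ = ∫ ω, Set.indicator {ω | (t : ℝ≥0∞) < τ ω} (fun _ => (1 : ℝ)) ω ∂P :=
          integral_condExp (F.le t)
      _ = (P {ω | (t : ℝ≥0∞) < τ ω}).toReal := by
          rw [integral_indicator hBm, setIntegral_const, smul_eq_mul, mul_one]; rfl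
  have hcompl : (P {ω | τ ω ≤ (t : ℝ≥0∞)}).toReal = 1 - (P {ω | (t : ℝ≥0∞) < τ ω}).toReal := by
    have hBm : MeasurableSet {ω | (t : ℝ≥0∞) < τ ω} := hτmeas measurableSet_Ioi
    have hset : {ω | τ ω ≤ (t : ℝ≥0∞)} = {ω | (t : ℝ≥0∞) < τ ω}ᶜ := by
      ext ω; simp [not_lt]
    rw [hset, measure_compl hBm (measure_ne_top _ _), measure_univ]
    rw [ENNReal.toReal_sub_of_le prob_le_one ENNReal.one_ne_top]
    simp
  set q : ℝ := (P {ω | τ ω ≤ (t : ℝ≥0∞)}).toReal with hqdef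
  have hq0 : 0 ≤ q := ENNReal.toReal_nonneg
  -- the double-integral functions
  set f2 : Ω → ℝ → ℝ≥0∞ := fun ω u => if X ω ≤ Real.exp (-u) then 1 else 0 with hf2def
  set f3 : Ω → ℝ → ℝ≥0∞ :=
    fun ω u => ENNReal.ofReal (Real.exp (-u)) * (if A t ω ≤ Real.exp (-u) then 1 else 0)
    with hf3def
  set ν : Measure ℝ := (volume : Measure ℝ).restrict (Set.Ioi (0:ℝ)) with hνdef
  -- Step A: pointwise identity for -log
  have hStepA : ∀ᵐ ω ∂P,
      ENNReal.ofReal (- Real.log (X ω)) = ∫⁻ u, f2 ω u ∂ν := by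
    filter_upwards [hXpos] with ω hω
    have hset : {u : ℝ | X ω ≤ Real.exp (-u)} = Set.Iic (- Real.log (X ω)) := by
      ext u
      simp only [Set.mem_setOf_eq, Set.mem_Iic]
      rw [← Real.log_le_iff_le_exp hω, le_neg]
    have hsm : MeasurableSet {u : ℝ | X ω ≤ Real.exp (-u)} := by
      rw [hset]; exact measurableSet_Iic
    have : ∫⁻ u, f2 ω u ∂ν = ν {u : ℝ | X ω ≤ Real.exp (-u)} := by
      rw [hf2def]
      simp only
      rw [← lintegral_indicator_one hsm]
      congr 1
    rw [this, hνdef, Measure.restrict_apply hsm, hset]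
    rw [Set.Iic_inter_Ioi]
    rw [Real.volume_Ioc]
    simp
  -- Step B: swap
  have hf2unc : Measurable (Function.uncurry f2) := by
    have hsm : MeasurableSet {p : Ω × ℝ | X p.1 ≤ Real.exp (-p.2)} := by
      refine measurableSet_le (hXmeas.comp measurable_fst) ?_
      exact (Real.continuous_exp.comp continuous_neg).measurable.comp measurable_snd
    have : Function.uncurry f2 = fun p : Ω × ℝ => if p ∈ {p : Ω × ℝ | X p.1 ≤ Real.exp (-p.2)}
        then (1:ℝ≥0∞) else 0 := rfl
    rw [this]
    exact Measurable.ite hsm measurable_const measurable_const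
  have hStepB : ∫⁻ ω, ∫⁻ u, f2 ω u ∂ν ∂P = ∫⁻ u, ∫⁻ ω, f2 ω u ∂P ∂ν :=
    lintegral_lintegral_swap hf2unc.aemeasurable
  -- Step C: per-u identity
  have hStepC : ∀ u : ℝ, u ∈ Set.Ioi (0:ℝ) →
      ∫⁻ ω, f2 ω u ∂P = ∫⁻ ω, f3 ω u ∂P := by
    intro u hu
    set c : ℝ := Real.exp (-u) with hcdef
    have hc0 : 0 < c := Real.exp_pos _
    have hc1 : c < 1 := by
      rw [hcdef, Real.exp_lt_one_iff]
      simpa using hu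
    have hXset : {ω | X ω ≤ c} = {ω | A t ω ≤ c ∧ sigC A c ω ≤ τ ω} := by
      ext ω
      have h1 : sigC A c ω ≤ ((m ω : ℝ≥0) : ℝ≥0∞) ↔ X ω ≤ c :=
        sigC_le_iff A c hAcont hAmono ω (m ω)
      rw [hcoemin ω] at h1
      constructor
      · intro h
        have h2 : sigC A c ω ≤ min (t : ℝ≥0∞) (τ ω) := h1.mpr h
        rw [le_min_iff] at h2
        exact ⟨(sigC_le_iff A c hAcont hAmono ω t).mp h2.1, h2.2⟩
      · intro h
        refine h1.mp ?_
        rw [le_min_iff]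
        exact ⟨(sigC_le_iff A c hAcont hAmono ω t).mpr h.1, h.2⟩
    have hmain := per_u P F hFcomplete τ hτmeas hypA hypH A hAver hAcont hAmono hA0 t c hc0 hc1
    have hXm : MeasurableSet {ω | X ω ≤ c} := hXmeas measurableSet_Iic
    have hAtm : MeasurableSet {ω | A t ω ≤ c} := (hmA' t) measurableSet_Iic
    have hl : ∫⁻ ω, f2 ω u ∂P = P {ω | X ω ≤ c} := by
      rw [hf2def]
      simp only
      rw [← lintegral_indicator_one hXm]
      congr 1
    have hr : ∫⁻ ω, f3 ω u ∂P = ENNReal.ofReal c * P {ω | A t ω ≤ c} := by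
      rw [hf3def]
      simp only
      rw [lintegral_const_mul]
      · congr 1
        rw [← lintegral_indicator_one hAtm]
        congr 1
      · exact Measurable.ite hAtm measurable_const measurable_const
    rw [hl, hr, hXset, hmain]
  -- Step E: swap back
  have hf3unc : Measurable (Function.uncurry (fun u ω => f3 ω u)) := by
    have hsm : MeasurableSet {p : ℝ × Ω | A t p.2 ≤ Real.exp (-p.1)} := by
      refine measurableSet_le ((hmA' t).comp measurable_snd) ?_
      exact (Real.continuous_exp.comp continuous_neg).measurable.comp measurable_fst
    have : Function.uncurry (fun u ω => f3 ω u) = fun p : ℝ × Ω =>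
        ENNReal.ofReal (Real.exp (-p.1)) *
          (if p ∈ {p : ℝ × Ω | A t p.2 ≤ Real.exp (-p.1)} then (1:ℝ≥0∞) else 0) := rfl
    rw [this]
    refine Measurable.mul ?_ (Measurable.ite hsm measurable_const measurable_const)
    exact (ENNReal.measurable_ofReal.comp
      ((Real.continuous_exp.comp continuous_neg).measurable)).comp measurable_fst
  have hStepE : ∫⁻ u, ∫⁻ ω, f3 ω u ∂P ∂ν = ∫⁻ ω, ∫⁻ u, f3 ω u ∂ν ∂P :=
    lintegral_lintegral_swap hf3unc.aemeasurable
  -- Step F: inner integral computation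
  have hStepF : ∀ᵐ ω ∂P, ∫⁻ u, f3 ω u ∂ν = ENNReal.ofReal (1 - A t ω) := by
    filter_upwards [hAt0] with ω h0
    set a : ℝ := A t ω with hadef
    have ha1 : a ≤ 1 := hA1 ω t
    have hind : f3 ω = fun u => Set.indicator {u : ℝ | a ≤ Real.exp (-u)}
        (fun u => ENNReal.ofReal (Real.exp (-u))) u := by
      funext u
      rw [hf3def]
      simp only [Set.indicator_apply, Set.mem_setOf_eq]
      by_cases h : a ≤ Real.exp (-u) <;> simp [h, ← hadef]
    rcases eq_or_lt_of_le h0 with h0' | h0'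
    · -- a = 0
      have hsetu : {u : ℝ | a ≤ Real.exp (-u)} = Set.univ := by
        ext u; simp [← h0', (Real.exp_pos (-u)).le]
      rw [hind, hsetu]
      simp only [Set.indicator_univ]
      have hi : IntegrableOn (fun u : ℝ => Real.exp (-u)) (Set.Ioi (0:ℝ)) := by
        have := exp_neg_integrableOn_Ioi 0 (one_pos)
        simpa using this
      rw [hνdef, ← ofReal_integral_eq_lintegral_ofReal hi
        (ae_of_all _ fun u => (Real.exp_pos _).le)]
      rw [integral_exp_neg_Ioi_zero, ← h0']
      simp
    · -- 0 < a
      have hsetu : {u : ℝ | a ≤ Real.exp (-u)} = Set.Iic (- Real.log a) := by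
        ext u
        simp only [Set.mem_setOf_eq, Set.mem_Iic]
        rw [← Real.log_le_iff_le_exp h0', le_neg]
      have hL0 : 0 ≤ - Real.log a := by
        simpa using Real.log_nonpos h0'.le ha1
      rw [hind]
      rw [lintegral_indicator (by rw [hsetu]; exact measurableSet_Iic)]
      rw [hνdef, Measure.restrict_restrict (by rw [hsetu]; exact measurableSet_Iic)]
      rw [hsetu, Set.Iic_inter_Ioi]
      have hi : IntegrableOn (fun u : ℝ => Real.exp (-u)) (Set.Ioc 0 (- Real.log a)) := by
        have := exp_neg_integrableOn_Ioi 0 (one_pos)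
        have h2 : IntegrableOn (fun x : ℝ => Real.exp (-1 * x)) (Set.Ioi (0:ℝ)) := this
        have h3 : IntegrableOn (fun u : ℝ => Real.exp (-u)) (Set.Ioi (0:ℝ)) := by
          simpa using h2
        exact h3.mono_set Set.Ioc_subset_Ioi_self
      rw [← ofReal_integral_eq_lintegral_ofReal hi (ae_of_all _ fun u => (Real.exp_pos _).le)]
      congr 1
      have hInt : ∫ u in Set.Ioc (0:ℝ) (- Real.log a), Real.exp (-u) = 1 - a := by
        rw [← intervalIntegral.integral_of_le hL0]
        rw [intervalIntegral.integral_comp_neg (fun x => Real.exp x)]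
        rw [integral_exp]
        rw [neg_neg, neg_zero, Real.exp_zero, Real.exp_log h0']
      rw [hInt]
  -- Step G
  have hAtint1 : Integrable (fun ω => 1 - A t ω) P := (integrable_const 1).sub (hAint t)
  have hStepG : ∫⁻ ω, ENNReal.ofReal (1 - A t ω) ∂P = ENNReal.ofReal q := by
    rw [← ofReal_integral_eq_lintegral_ofReal hAtint1
      (ae_of_all _ fun ω => by show (0:ℝ) ≤ 1 - A t ω; linarith [hA1 ω t])]
    congr 1
    rw [integral_sub (integrable_const 1) (hAint t)]
    simp only [integral_const, Measure.real, measure_univ, ENNReal.toReal_one, smul_eq_mul, mul_one]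
    rw [hAtι, hcompl]
  -- put the chain together
  have hchain : ∫⁻ ω, ENNReal.ofReal (- Real.log (X ω)) ∂P = ENNReal.ofReal q := by
    calc ∫⁻ ω, ENNReal.ofReal (- Real.log (X ω)) ∂P
        = ∫⁻ ω, ∫⁻ u, f2 ω u ∂ν ∂P := lintegral_congr_ae hStepA
      _ = ∫⁻ u, ∫⁻ ω, f2 ω u ∂P ∂ν := hStepB
      _ = ∫⁻ u, ∫⁻ ω, f3 ω u ∂P ∂ν := by
          rw [hνdef]
          refine setLIntegral_congr_fun measurableSet_Ioi ?_
          exact hStepC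
      _ = ∫⁻ ω, ∫⁻ u, f3 ω u ∂ν ∂P := hStepE
      _ = ∫⁻ ω, ENNReal.ofReal (1 - A t ω) ∂P := lintegral_congr_ae hStepF
      _ = ENNReal.ofReal q := hStepG
  -- conclusion
  have hInt : Integrable (fun ω => - Real.log (X ω)) P := by
    refine ⟨hlogmeas, ?_⟩
    rw [hasFiniteIntegral_iff_ofReal hnn, hchain]
    exact ENNReal.ofReal_lt_top
  refine ⟨hInt, ?_⟩
  rw [integral_eq_lintegral_of_nonneg_ae hnn hlogmeas, hchain, ENNReal.toReal_ofReal hq0]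
end
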